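/- arXiv:2202.00437 — 4 statements merged into one kernel-verified Lean document; each statement's English description precedes it below -/
import Mathlib

section
/- Let β=(β_n)_{n∈ℕ} be a Cantor base with x_β<+∞ and let a,b∈S'_β. Then: (1) if a <_lex b then val_β(a) ≤ val_β(b); (2) if val_β(a) < val_β(b) then a <_lex b. -/
open Filter Topology

/-- A Cantor real base: a sequence of reals `> 1` whose infinite product diverges to `+∞`. -/
structure IsCantorBase (β : ℕ → ℝ) : Prop where
  one_lt : ∀ n, 1 < β n
  prod_tendsto : Tendsto (fun N => ∏ i ∈ Finset.range N, β i) atTop atTop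

/-- The product `β_0 ⋯ β_n`. -/
noncomputable def prodUpTo (β : ℕ → ℝ) (n : ℕ) : ℝ := ∏ i ∈ Finset.range (n + 1), β i

/-- The shifted base `β^(n) = (β_n, β_{n+1}, …)`. -/
def shiftBase (β : ℕ → ℝ) (n : ℕ) : ℕ → ℝ := fun m => β (n + m)

/-- `x_β = Σ_{n} (⌈β_n⌉ - 1)/(β_0 ⋯ β_n)`. -/
noncomputable def xB (β : ℕ → ℝ) : ℝ := ∑' n, ((⌈β n⌉ : ℝ) - 1) / prodUpTo β n

/-- The condition `x_β < +∞`, i.e. the series defining `x_β` converges. -/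
def XBSummable (β : ℕ → ℝ) : Prop :=
  Summable (fun n => ((⌈β n⌉ : ℝ) - 1) / prodUpTo β n)

/-- `val_β(a) = Σ_n a_n/(β_0 ⋯ β_n)`. -/
noncomputable def valB (β : ℕ → ℝ) (a : ℕ → ℤ) : ℝ := ∑' n, (a n : ℝ) / prodUpTo β n

/-- The digit condition `a_n ∈ [[0, ⌈β_n⌉ - 1]]` for all `n`. -/
def validWord (β : ℕ → ℝ) (a : ℕ → ℤ) : Prop := ∀ n, 0 ≤ a n ∧ a n ≤ ⌈β n⌉ - 1

/-- The flip map `θ_β`. -/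
noncomputable def theta (β : ℕ → ℝ) (a : ℕ → ℤ) : ℕ → ℤ := fun n => ⌈β n⌉ - 1 - a n

/-- The greedy remainders `r_{β,n}(x)`. -/
noncomputable def greedyR (β : ℕ → ℝ) (x : ℝ) : ℕ → ℝ
  | 0 => β 0 * x - (⌊β 0 * x⌋ : ℝ)
  | n + 1 => β (n + 1) * greedyR β x n - (⌊β (n + 1) * greedyR β x n⌋ : ℝ)

/-- The greedy digits `ε_{β,n}(x)`; `greedyDigit β x` is the greedy β-expansion `d_β(x)`. -/
noncomputable def greedyDigit (β : ℕ → ℝ) (x : ℝ) : ℕ → ℤ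
  | 0 => ⌊β 0 * x⌋
  | n + 1 => ⌊β (n + 1) * greedyR β x n⌋

/-- The lazy remainders `s_{β,n}(x)`. -/
noncomputable def lazyS (β : ℕ → ℝ) (x : ℝ) : ℕ → ℝ
  | 0 => β 0 * x - (⌈β 0 * x - xB (shiftBase β 1)⌉ : ℝ)
  | n + 1 => β (n + 1) * lazyS β x n -
      (⌈β (n + 1) * lazyS β x n - xB (shiftBase β (n + 2))⌉ : ℝ)

/-- The lazy digits `ξ_{β,n}(x)`; `lazyDigit β x` is the lazy β-expansion `ℓ_β(x)`. -/
noncomputable def lazyDigit (β : ℕ → ℝ) (x : ℝ) : ℕ → ℤ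
  | 0 => ⌈β 0 * x - xB (shiftBase β 1)⌉
  | n + 1 => ⌈β (n + 1) * lazyS β x n - xB (shiftBase β (n + 2))⌉

/-- Strict lexicographic order on infinite words. -/
def lexLt (a b : ℕ → ℤ) : Prop := ∃ k, (∀ i < k, a i = b i) ∧ a k < b k

/-- Lexicographic order on infinite words. -/
def lexLe (a b : ℕ → ℤ) : Prop := lexLt a b ∨ a = b

/-- `D_β`, the set of greedy β-expansions of points of `[0,1)`. -/
def greedySet (β : ℕ → ℝ) : Set (ℕ → ℤ) :=
  {a | ∃ x ∈ Set.Ico (0 : ℝ) 1, a = greedyDigit β x}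

/-- `D'_β`, the set of lazy β-expansions of points of `(x_β - 1, x_β]`. -/
def lazySet (β : ℕ → ℝ) : Set (ℕ → ℤ) :=
  {a | ∃ x ∈ Set.Ioc (xB β - 1) (xB β), a = lazyDigit β x}

/-- `Δ'_β = ⋃_n D'_{β^(n)}`. -/
def deltaSet (β : ℕ → ℝ) : Set (ℕ → ℤ) := ⋃ n, lazySet (shiftBase β n)


namespace CantorAux

variable {β : ℕ → ℝ}

/-- shorthand for the terms of the `x_β` series. -/
noncomputable def xterm (β : ℕ → ℝ) (n : ℕ) : ℝ := ((⌈β n⌉ : ℝ) - 1) / prodUpTo β n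

lemma beta_pos (hβ : IsCantorBase β) (n : ℕ) : 0 < β n := lt_trans one_pos (hβ.one_lt n)

lemma prodUpTo_pos (hβ : IsCantorBase β) (n : ℕ) : 0 < prodUpTo β n :=
  Finset.prod_pos fun i _ => beta_pos hβ i

lemma prodUpTo_shift_pos (hβ : IsCantorBase β) (k n : ℕ) : 0 < prodUpTo (shiftBase β k) n :=
  Finset.prod_pos fun i _ => beta_pos hβ (k + i)

lemma shiftBase_zero : shiftBase β 0 = β := funext fun n => by simp [shiftBase]

lemma prodUpTo_shift (k m : ℕ) :
    (∏ i ∈ Finset.range k, β i) * prodUpTo (shiftBase β k) m = prodUpTo β (k + m) :=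
  (Finset.prod_range_add β k (m + 1)).symm

lemma ceil_sub_one_nonneg (hβ : IsCantorBase β) (n : ℕ) : (0 : ℝ) ≤ (⌈β n⌉ : ℝ) - 1 := by
  have h1 := hβ.one_lt n
  have h2 := Int.le_ceil (β n)
  linarith

lemma xterm_nonneg (hβ : IsCantorBase β) (n : ℕ) : 0 ≤ xterm β n :=
  div_nonneg (ceil_sub_one_nonneg hβ n) (prodUpTo_pos hβ n).le

lemma summable_xterm_add (hx : XBSummable β) (m : ℕ) : Summable fun j => xterm β (m + j) := by
  have h : Summable fun j => xterm β (j + m) := (summable_nat_add_iff m).2 hx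
  exact h.congr fun j => by rw [Nat.add_comm]

lemma xterm_shift_eq (hβ : IsCantorBase β) (m j : ℕ) :
    ((⌈β (m + j)⌉ : ℝ) - 1) / prodUpTo (shiftBase β m) j
      = (∏ i ∈ Finset.range m, β i) * xterm β (m + j) := by
  have hQ : (0 : ℝ) < ∏ i ∈ Finset.range m, β i := Finset.prod_pos fun i _ => beta_pos hβ i
  have hp : (0 : ℝ) < prodUpTo (shiftBase β m) j := prodUpTo_shift_pos hβ m j
  rw [xterm, ← prodUpTo_shift (β := β) m j]
  field_simp

lemma summable_xterm_shift (hβ : IsCantorBase β) (hx : XBSummable β) (m : ℕ) :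
    Summable fun j => ((⌈β (m + j)⌉ : ℝ) - 1) / prodUpTo (shiftBase β m) j := by
  have h := (summable_xterm_add hx m).mul_left (∏ i ∈ Finset.range m, β i)
  exact h.congr fun j => (xterm_shift_eq hβ m j).symm

lemma xB_shift_eq (hβ : IsCantorBase β) (m : ℕ) :
    xB (shiftBase β m) = (∏ i ∈ Finset.range m, β i) * ∑' j, xterm β (m + j) := by
  rw [xB, ← tsum_mul_left]
  exact tsum_congr fun j => xterm_shift_eq hβ m j

lemma xB_shift_nonneg (hβ : IsCantorBase β) (m : ℕ) : 0 ≤ xB (shiftBase β m) := by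
  rw [xB_shift_eq hβ m]
  exact mul_nonneg (Finset.prod_nonneg fun i _ => (beta_pos hβ i).le)
    (tsum_nonneg fun j => xterm_nonneg hβ (m + j))

lemma prodUpTo_shift_succ (k n : ℕ) :
    prodUpTo (shiftBase β k) (n + 1) = β k * prodUpTo (shiftBase β (k + 1)) n := by
  unfold prodUpTo shiftBase
  rw [Finset.prod_range_succ']
  have h1 : β (k + 0) = β k := by norm_num
  rw [h1, mul_comm]
  congr 1
  exact Finset.prod_congr rfl fun i _ => by congr 1; omega

lemma xB_shift_succ (hβ : IsCantorBase β) (hx : XBSummable β) (k : ℕ) :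
    β k * xB (shiftBase β k) = ((⌈β k⌉ : ℝ) - 1) + xB (shiftBase β (k + 1)) := by
  have hb := beta_pos hβ k
  have hg := summable_xterm_shift hβ hx k
  have h0 : xB (shiftBase β k)
      = ((⌈β (k + 0)⌉ : ℝ) - 1) / prodUpTo (shiftBase β k) 0
        + ∑' n, ((⌈β (k + (n + 1))⌉ : ℝ) - 1) / prodUpTo (shiftBase β k) (n + 1) := by
    rw [xB]
    exact Summable.tsum_eq_zero_add (f := fun j => ((⌈β (k + j)⌉ : ℝ) - 1) / prodUpTo (shiftBase β k) j) hg
  have h1 : ∀ n : ℕ, ((⌈β (k + (n + 1))⌉ : ℝ) - 1) / prodUpTo (shiftBase β k) (n + 1)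
      = (1 / β k) * (((⌈β (k + 1 + n)⌉ : ℝ) - 1) / prodUpTo (shiftBase β (k + 1)) n) := by
    intro n
    rw [prodUpTo_shift_succ]
    have hp := prodUpTo_shift_pos hβ (k + 1) n
    have he : k + (n + 1) = k + 1 + n := by omega
    rw [he]
    field_simp
  have h2 : xB (shiftBase β k)
      = ((⌈β k⌉ : ℝ) - 1) / β k + (1 / β k) * xB (shiftBase β (k + 1)) := by
    rw [h0]
    congr 1
    · have : prodUpTo (shiftBase β k) 0 = β k := by simp [prodUpTo, shiftBase]
      rw [this]
      norm_num
    · rw [xB, ← tsum_mul_left]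
      exact tsum_congr h1
  rw [h2]
  field_simp

lemma lazyS_mem (x : ℝ) (n : ℕ) :
    xB (shiftBase β (n + 1)) - 1 < lazyS β x n ∧ lazyS β x n ≤ xB (shiftBase β (n + 1)) := by
  cases n with
  | zero =>
    constructor
    · show xB (shiftBase β 1) - 1 < β 0 * x - (⌈β 0 * x - xB (shiftBase β 1)⌉ : ℝ)
      have := Int.ceil_lt_add_one (β 0 * x - xB (shiftBase β 1))
      linarith
    · show β 0 * x - (⌈β 0 * x - xB (shiftBase β 1)⌉ : ℝ) ≤ xB (shiftBase β 1)
      have := Int.le_ceil (β 0 * x - xB (shiftBase β 1))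
      linarith
  | succ m =>
    constructor
    · show xB (shiftBase β (m + 2)) - 1 < β (m + 1) * lazyS β x m -
        (⌈β (m + 1) * lazyS β x m - xB (shiftBase β (m + 2))⌉ : ℝ)
      have := Int.ceil_lt_add_one (β (m + 1) * lazyS β x m - xB (shiftBase β (m + 2)))
      linarith
    · show β (m + 1) * lazyS β x m -
        (⌈β (m + 1) * lazyS β x m - xB (shiftBase β (m + 2))⌉ : ℝ) ≤ xB (shiftBase β (m + 2))
      have := Int.le_ceil (β (m + 1) * lazyS β x m - xB (shiftBase β (m + 2)))
      linarith

lemma ceil_digit_bound (hβ : IsCantorBase β) (hx : XBSummable β) (k : ℕ) {y : ℝ}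
    (h1 : xB (shiftBase β k) - 1 < y) (h2 : y ≤ xB (shiftBase β k)) :
    0 ≤ ⌈β k * y - xB (shiftBase β (k + 1))⌉ ∧
      ⌈β k * y - xB (shiftBase β (k + 1))⌉ ≤ ⌈β k⌉ - 1 := by
  have hb := beta_pos hβ k
  have hrec := xB_shift_succ hβ hx k
  have hceil := Int.le_ceil (β k)
  constructor
  · have hgt : ((-1 : ℤ) : ℝ) < β k * y - xB (shiftBase β (k + 1)) := by
      push_cast
      nlinarith [mul_lt_mul_of_pos_left h1 hb]
    have := Int.lt_ceil.mpr hgt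
    omega
  · have : ⌈β k * y - xB (shiftBase β (k + 1))⌉ ≤ ⌈β k⌉ - 1 := by
      apply Int.ceil_le.mpr
      push_cast
      nlinarith [mul_le_mul_of_nonneg_left h2 hb.le]
    exact this

lemma lazyDigit_valid (hβ : IsCantorBase β) (hx : XBSummable β) {x : ℝ}
    (hmem : x ∈ Set.Ioc (xB β - 1) (xB β)) : validWord β (lazyDigit β x) := by
  intro n
  cases n with
  | zero =>
    have h1 : xB (shiftBase β 0) - 1 < x := by rw [shiftBase_zero]; exact hmem.1
    have h2 : x ≤ xB (shiftBase β 0) := by rw [shiftBase_zero]; exact hmem.2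
    exact ceil_digit_bound hβ hx 0 h1 h2
  | succ m =>
    have hs := lazyS_mem (β := β) x m
    exact ceil_digit_bound hβ hx (m + 1) hs.1 hs.2

lemma summable_tail (hβ : IsCantorBase β) (hx : XBSummable β) {a : ℕ → ℤ}
    (hva : validWord β a) (k : ℕ) :
    Summable fun n => (a (k + 1 + n) : ℝ) / prodUpTo (shiftBase β (k + 1)) n := by
  apply Summable.of_nonneg_of_le _ _ (summable_xterm_shift hβ hx (k + 1))
  · intro n
    have := (hva (k + 1 + n)).1
    exact div_nonneg (by exact_mod_cast this) (prodUpTo_shift_pos hβ (k + 1) n).le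
  · intro n
    exact div_le_div_of_nonneg_right (by exact_mod_cast (hva (k + 1 + n)).2)
      (prodUpTo_shift_pos hβ (k + 1) n).le

lemma summable_valB (hβ : IsCantorBase β) (hx : XBSummable β) {a : ℕ → ℤ}
    (hva : validWord β a) : Summable fun n => (a n : ℝ) / prodUpTo β n := by
  apply Summable.of_nonneg_of_le _ _ hx
  · intro n
    exact div_nonneg (by exact_mod_cast (hva n).1) (prodUpTo_pos hβ n).le
  · intro n
    exact div_le_div_of_nonneg_right (by exact_mod_cast (hva n).2) (prodUpTo_pos hβ n).le

lemma tailVal_nonneg (hβ : IsCantorBase β) {a : ℕ → ℤ} (hva : validWord β a) (k : ℕ) :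
    0 ≤ ∑' n, (a (k + 1 + n) : ℝ) / prodUpTo (shiftBase β (k + 1)) n :=
  tsum_nonneg fun n => div_nonneg (by exact_mod_cast (hva (k + 1 + n)).1)
    (prodUpTo_shift_pos hβ (k + 1) n).le

lemma tail_le (hβ : IsCantorBase β) (hx : XBSummable β) {a : ℕ → ℤ}
    (hva : validWord β a) (k : ℕ) :
    (∑' n, (a (k + 1 + n) : ℝ) / prodUpTo (shiftBase β (k + 1)) n) ≤ xB (shiftBase β (k + 1)) := by
  rw [xB]
  apply Summable.tsum_le_tsum _ (summable_tail hβ hx hva k) (summable_xterm_shift hβ hx (k + 1))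
  intro n
  exact div_le_div_of_nonneg_right (by exact_mod_cast (hva (k + 1 + n)).2)
    (prodUpTo_shift_pos hβ (k + 1) n).le

lemma valB_split (hβ : IsCantorBase β) (hx : XBSummable β) {a : ℕ → ℤ}
    (hva : validWord β a) (k : ℕ) :
    valB β a = (∑ n ∈ Finset.range (k + 1), (a n : ℝ) / prodUpTo β n)
      + (∑' n, (a (k + 1 + n) : ℝ) / prodUpTo (shiftBase β (k + 1)) n) / prodUpTo β k := by
  have hs := summable_valB hβ hx hva
  rw [valB, ← hs.sum_add_tsum_nat_add (k + 1)]
  congr 1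
  rw [← tsum_div_const]
  apply tsum_congr
  intro n
  have hP : prodUpTo β k = ∏ i ∈ Finset.range (k + 1), β i := rfl
  have h1 : prodUpTo β k * prodUpTo (shiftBase β (k + 1)) n = prodUpTo β (k + 1 + n) := by
    rw [hP]; exact prodUpTo_shift (k + 1) n
  have he : n + (k + 1) = k + 1 + n := by omega
  rw [he, div_div, mul_comm, h1]

lemma closure_approx {b : ℕ → ℤ} (hb : b ∈ closure (lazySet β)) (M : ℕ) :
    ∃ c ∈ lazySet β, ∀ i < M, c i = b i := by
  have hU : IsOpen {c : ℕ → ℤ | ∀ i < M, c i = b i} := by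
    have he : {c : ℕ → ℤ | ∀ i < M, c i = b i}
        = ⋂ i ∈ Finset.range M, {c : ℕ → ℤ | c i = b i} := by
      ext c; simp [Finset.mem_range]
    rw [he]
    apply isOpen_biInter_finset fun i _ => ?_
    show IsOpen ((fun c : ℕ → ℤ => c i) ⁻¹' {b i})
    exact (isOpen_discrete ({b i} : Set ℤ)).preimage (continuous_apply i)
  have hbU : b ∈ {c : ℕ → ℤ | ∀ i < M, c i = b i} := fun i _ => rfl
  obtain ⟨c, hcU, hcS⟩ := _root_.mem_closure_iff.mp hb _ hU hbU
  exact ⟨c, hcS, hcU⟩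

lemma valid_of_closure (hβ : IsCantorBase β) (hx : XBSummable β) {b : ℕ → ℤ}
    (hb : b ∈ closure (lazySet β)) : validWord β b := by
  intro n
  obtain ⟨c, hc, hagree⟩ := closure_approx hb (n + 1)
  obtain ⟨x, hxmem, rfl⟩ := hc
  rw [← hagree n (Nat.lt_succ_self n)]
  exact lazyDigit_valid hβ hx hxmem n

lemma lazy_partial (hβ : IsCantorBase β) (x : ℝ) (k N : ℕ) :
    ∑ n ∈ Finset.range N, (lazyDigit β x (k + 1 + n) : ℝ) / prodUpTo (shiftBase β (k + 1)) n
      = lazyS β x k - lazyS β x (k + N) / ∏ i ∈ Finset.range N, β (k + 1 + i) := by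
  induction N with
  | zero => simp
  | succ N ih =>
    rw [Finset.sum_range_succ, ih, Finset.prod_range_succ]
    have hR : (0 : ℝ) < ∏ i ∈ Finset.range N, β (k + 1 + i) :=
      Finset.prod_pos fun i _ => beta_pos hβ _
    have hbp : (0 : ℝ) < β (k + 1 + N) := beta_pos hβ _
    have hd : (lazyDigit β x (k + 1 + N) : ℝ)
        = β (k + 1 + N) * lazyS β x (k + N) - lazyS β x (k + N + 1) := by
      have he : k + 1 + N = (k + N) + 1 := by omega
      rw [he]
      show ((⌈β (k + N + 1) * lazyS β x (k + N) - xB (shiftBase β (k + N + 2))⌉ : ℝ))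
        = β (k + N + 1) * lazyS β x (k + N) - lazyS β x (k + N + 1)
      show ((⌈β (k + N + 1) * lazyS β x (k + N) - xB (shiftBase β (k + N + 2))⌉ : ℝ))
        = β (k + N + 1) * lazyS β x (k + N) - (β (k + N + 1) * lazyS β x (k + N)
          - (⌈β (k + N + 1) * lazyS β x (k + N) - xB (shiftBase β (k + N + 2))⌉ : ℝ))
      ring
    have hp : prodUpTo (shiftBase β (k + 1)) N
        = (∏ i ∈ Finset.range N, β (k + 1 + i)) * β (k + 1 + N) := by
      show (∏ i ∈ Finset.range (N + 1), β (k + 1 + i)) = _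
      rw [Finset.prod_range_succ]
    rw [hd, hp]
    have he2 : k + N + 1 = k + (N + 1) := by omega
    rw [← he2]
    field_simp
    ring

lemma tendsto_tailX (hx : XBSummable β) :
    Tendsto (fun m => ∑' j, xterm β (m + j)) atTop (𝓝 0) := by
  have h := tendsto_sum_nat_add (xterm β)
  apply h.congr
  intro m
  exact tsum_congr fun j => by rw [Nat.add_comm]

lemma tail_ge (hβ : IsCantorBase β) (hx : XBSummable β) {b : ℕ → ℤ}
    (hb : b ∈ closure (lazySet β)) (k : ℕ) :
    xB (shiftBase β (k + 1)) - 1 ≤ ∑' n, (b (k + 1 + n) : ℝ) / prodUpTo (shiftBase β (k + 1)) n := by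
  have hvb : validWord β b := valid_of_closure hβ hx hb
  have hsum := summable_tail hβ hx hvb k
  set Q : ℝ := ∏ i ∈ Finset.range (k + 1), β i with hQdef
  have hQ : 0 < Q := Finset.prod_pos fun i _ => beta_pos hβ i
  have key : ∀ N : ℕ, xB (shiftBase β (k + 1)) - 1 - Q * (∑' j, xterm β (k + 1 + N + j))
      ≤ ∑' n, (b (k + 1 + n) : ℝ) / prodUpTo (shiftBase β (k + 1)) n := by
    intro N
    obtain ⟨c, hc, hagree⟩ := closure_approx hb (k + 1 + N)
    obtain ⟨x, hxmem, rfl⟩ := hc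
    have hps := lazy_partial hβ x k N
    have hR : (0 : ℝ) < ∏ i ∈ Finset.range N, β (k + 1 + i) :=
      Finset.prod_pos fun i _ => beta_pos hβ _
    -- partial sums of b agree with those of c
    have hagree' : ∑ n ∈ Finset.range N, (b (k + 1 + n) : ℝ) / prodUpTo (shiftBase β (k + 1)) n
        = ∑ n ∈ Finset.range N,
            (lazyDigit β x (k + 1 + n) : ℝ) / prodUpTo (shiftBase β (k + 1)) n := by
      apply Finset.sum_congr rfl
      intro n hn
      rw [hagree (k + 1 + n) (by have := Finset.mem_range.mp hn; omega)]
    have hle : ∑ n ∈ Finset.range N, (b (k + 1 + n) : ℝ) / prodUpTo (shiftBase β (k + 1)) n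
        ≤ ∑' n, (b (k + 1 + n) : ℝ) / prodUpTo (shiftBase β (k + 1)) n := by
      apply Summable.sum_le_tsum _ _ hsum
      intro n _
      exact div_nonneg (by exact_mod_cast (hvb (k + 1 + n)).1)
        (prodUpTo_shift_pos hβ (k + 1) n).le
    -- bounds on the remainders
    have hs1 := (lazyS_mem (β := β) x k).1
    have hs2 := (lazyS_mem (β := β) x (k + N)).2
    -- x_{k+N+1} / R_N = Q * T (k+1+N)
    have hxb : xB (shiftBase β (k + N + 1))
        = Q * (∏ i ∈ Finset.range N, β (k + 1 + i)) * (∑' j, xterm β (k + 1 + N + j)) := by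
      have h1 : xB (shiftBase β (k + 1 + N))
          = (∏ i ∈ Finset.range (k + 1 + N), β i) * ∑' j, xterm β (k + 1 + N + j) :=
        xB_shift_eq hβ (k + 1 + N)
      have h2 : (∏ i ∈ Finset.range (k + 1 + N), β i)
          = Q * ∏ i ∈ Finset.range N, β (k + 1 + i) := by
        rw [hQdef]
        exact Finset.prod_range_add β (k + 1) N
      have he : k + N + 1 = k + 1 + N := by omega
      rw [he, h1, h2]
    have hbound : xB (shiftBase β (k + 1)) - 1 - Q * (∑' j, xterm β (k + 1 + N + j))
        ≤ lazyS β x k - lazyS β x (k + N) / ∏ i ∈ Finset.range N, β (k + 1 + i) := by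
      have h3 : lazyS β x (k + N) / (∏ i ∈ Finset.range N, β (k + 1 + i))
          ≤ Q * (∑' j, xterm β (k + 1 + N + j)) := by
        rw [div_le_iff₀ hR]
        calc lazyS β x (k + N) ≤ xB (shiftBase β (k + N + 1)) := hs2
        _ = Q * (∏ i ∈ Finset.range N, β (k + 1 + i)) * (∑' j, xterm β (k + 1 + N + j)) := hxb
        _ = Q * (∑' j, xterm β (k + 1 + N + j)) * ∏ i ∈ Finset.range N, β (k + 1 + i) := by ring
      linarith
    calc xB (shiftBase β (k + 1)) - 1 - Q * (∑' j, xterm β (k + 1 + N + j))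
        ≤ lazyS β x k - lazyS β x (k + N) / ∏ i ∈ Finset.range N, β (k + 1 + i) := hbound
      _ = ∑ n ∈ Finset.range N,
            (lazyDigit β x (k + 1 + n) : ℝ) / prodUpTo (shiftBase β (k + 1)) n := hps.symm
      _ = ∑ n ∈ Finset.range N, (b (k + 1 + n) : ℝ) / prodUpTo (shiftBase β (k + 1)) n :=
          hagree'.symm
      _ ≤ _ := hle
  -- pass to the limit
  have hT : Tendsto (fun N : ℕ => ∑' j, xterm β (k + 1 + N + j)) atTop (𝓝 0) := by
    have h1 := (tendsto_tailX (β := β) hx).comp (Filter.tendsto_add_atTop_nat (k + 1))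
    apply h1.congr
    intro N
    simp only [Function.comp]
    exact tsum_congr fun j => by rw [show N + (k + 1) + j = k + 1 + N + j by omega]
  have hlim : Tendsto (fun N : ℕ => xB (shiftBase β (k + 1)) - 1
      - Q * (∑' j, xterm β (k + 1 + N + j))) atTop (𝓝 (xB (shiftBase β (k + 1)) - 1)) := by
    have h2 : Tendsto (fun N : ℕ => (xB (shiftBase β (k + 1)) - 1)
        - Q * (∑' j, xterm β (k + 1 + N + j))) atTop
        (𝓝 ((xB (shiftBase β (k + 1)) - 1) - Q * 0)) :=
      Tendsto.sub tendsto_const_nhds (hT.const_mul Q)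
    simpa using h2
  exact le_of_tendsto hlim (Filter.Eventually.of_forall key)

lemma valB_mono (hβ : IsCantorBase β) (hx : XBSummable β) {a b : ℕ → ℤ}
    (ha : a ∈ closure (lazySet β)) (hb : b ∈ closure (lazySet β))
    (hlt : lexLt a b) : valB β a ≤ valB β b := by
  obtain ⟨k, hpre, hk⟩ := hlt
  have hva := valid_of_closure hβ hx ha
  have hvb := valid_of_closure hβ hx hb
  have hPk := prodUpTo_pos hβ k
  rw [valB_split hβ hx hva k, valB_split hβ hx hvb k,
    Finset.sum_range_succ, Finset.sum_range_succ]
  have hsum_eq : ∑ n ∈ Finset.range k, (a n : ℝ) / prodUpTo β n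
      = ∑ n ∈ Finset.range k, (b n : ℝ) / prodUpTo β n :=
    Finset.sum_congr rfl fun i hi => by rw [hpre i (Finset.mem_range.mp hi)]
  rw [hsum_eq]
  have h1 : (a k : ℝ) + 1 ≤ (b k : ℝ) := by exact_mod_cast Int.add_one_le_iff.mpr hk
  have hta := tail_le hβ hx hva k
  have htb := tail_ge hβ hx hb k
  rw [add_assoc, add_assoc, ← add_div, ← add_div]
  exact add_le_add_right (div_le_div_of_nonneg_right (by linarith) hPk.le) _

end CantorAux

/-- on `S'_β`, lexicographic order and values are compatible. -/
theorem lazyShiftClosure_order (β : ℕ → ℝ) (hβ : IsCantorBase β) (hx : XBSummable β)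
    (a b : ℕ → ℤ) (ha : a ∈ closure (lazySet β)) (hb : b ∈ closure (lazySet β)) :
    (lexLt a b → valB β a ≤ valB β b) ∧ (valB β a < valB β b → lexLt a b) := by
  constructor
  · exact fun h => CantorAux.valB_mono hβ hx ha hb h
  · intro hv
    by_contra hns
    have hne : a ≠ b := by rintro rfl; exact lt_irrefl _ hv
    have hex : ∃ n, a n ≠ b n := Function.ne_iff.mp hne
    classical
    have hk0 : a (Nat.find hex) ≠ b (Nat.find hex) := Nat.find_spec hex
    have hpre : ∀ i < Nat.find hex, a i = b i := fun i hi => not_not.mp (Nat.find_min hex hi)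
    rcases lt_or_gt_of_ne hk0 with h | h
    · exact hns ⟨Nat.find hex, hpre, h⟩
    · have := CantorAux.valB_mono hβ hx hb ha
        ⟨Nat.find hex, fun i hi => (hpre i hi).symm, h⟩
      linarith
end

section
/- (Lazy Parry criterion.) Let β=(β_n)_{n∈ℕ} be a Cantor base with x_β<+∞ and let a be an infinite word over ℕ. Then: (1) a∈D'_β if and only if a_n∈[[0,⌈β_n⌉−1]] for all n∈ℕ and σ^n(a) >_lex ℓ*_{β^(n)}(x_{β^(n)}−1) for all n∈ℕ; (2) a∈S'_β if and only if a_n∈[[0,⌈β_n⌉−1]] for all n∈ℕ and σ^n(a) ≥_lex ℓ*_{β^(n)}(x_{β^(n)}−1) for all n∈ℕ. -/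
open Filter Topology

namespace LazyParry

/-- `Q β n = β_0 ⋯ β_{n-1}` (empty product for `n = 0`). -/
noncomputable def prodQ (β : ℕ → ℝ) (n : ℕ) : ℝ := ∏ i ∈ Finset.range n, β i

lemma prodUpTo_eq (β : ℕ → ℝ) (n : ℕ) : prodUpTo β n = prodQ β (n + 1) := rfl

lemma one_le_prodQ {β : ℕ → ℝ} (hβ : IsCantorBase β) (n : ℕ) : 1 ≤ prodQ β n := by
  have : ∏ _i ∈ Finset.range n, (1:ℝ) ≤ ∏ i ∈ Finset.range n, β i :=
    Finset.prod_le_prod (fun i _ => zero_le_one) (fun i _ => (hβ.one_lt i).le)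
  simpa [prodQ] using this

lemma prodQ_pos {β : ℕ → ℝ} (hβ : IsCantorBase β) (n : ℕ) : 0 < prodQ β n :=
  lt_of_lt_of_le one_pos (one_le_prodQ hβ n)

lemma prodQ_mono {β : ℕ → ℝ} (hβ : IsCantorBase β) {n m : ℕ} (h : n ≤ m) :
    prodQ β n ≤ prodQ β m := by
  have h1 : (1:ℝ) ≤ ∏ i ∈ Finset.range (m - n), β (n + i) := by
    have : ∏ _i ∈ Finset.range (m-n), (1:ℝ) ≤ ∏ i ∈ Finset.range (m-n), β (n+i) :=
      Finset.prod_le_prod (fun i _ => zero_le_one) (fun i _ => (hβ.one_lt (n+i)).le)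
    simpa using this
  have h2 := prodQ_pos hβ n
  unfold prodQ
  rw [← Nat.add_sub_cancel' h, Finset.prod_range_add]
  unfold prodQ at h2
  nlinarith

lemma prodUpTo_pos {β : ℕ → ℝ} (hβ : IsCantorBase β) (n : ℕ) : 0 < prodUpTo β n :=
  prodQ_pos hβ (n + 1)

lemma shiftBase_zero (β : ℕ → ℝ) : shiftBase β 0 = β := funext fun m => by simp [shiftBase]

lemma shiftBase_shiftBase (β : ℕ → ℝ) (n m : ℕ) :
    shiftBase (shiftBase β n) m = shiftBase β (n + m) :=
  funext fun k => by simp [shiftBase, Nat.add_assoc]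

lemma isCantorBase_shift {β : ℕ → ℝ} (hβ : IsCantorBase β) (n : ℕ) :
    IsCantorBase (shiftBase β n) := by
  constructor
  · exact fun m => hβ.one_lt (n + m)
  · have h : Tendsto (fun N => prodQ β (N + n)) atTop atTop :=
      hβ.prod_tendsto.comp (tendsto_add_atTop_nat n)
    have key : ∀ N, prodQ β (N + n) = prodQ β n * ∏ i ∈ Finset.range N, shiftBase β n i := by
      intro N
      rw [Nat.add_comm, prodQ, prodQ, Finset.prod_range_add]; rfl
    rw [funext key] at h
    exact (tendsto_const_mul_atTop_of_pos (prodQ_pos hβ n)).mp h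

lemma prodQ_shift {β : ℕ → ℝ} (n m : ℕ) :
    prodQ β n * prodQ (shiftBase β n) m = prodQ β (n + m) := by
  rw [prodQ, prodQ, prodQ, Finset.prod_range_add]; rfl

lemma prodUpTo_shift {β : ℕ → ℝ} (n m : ℕ) :
    prodQ β n * prodUpTo (shiftBase β n) m = prodUpTo β (n + m) := by
  rw [prodUpTo_eq, prodUpTo_eq, show n + m + 1 = n + (m + 1) from by ring]
  exact prodQ_shift n (m + 1)

/-- the `n`-th term of the series defining `x_β`. -/
noncomputable def xterm (β : ℕ → ℝ) (n : ℕ) : ℝ := ((⌈β n⌉ : ℝ) - 1) / prodUpTo β n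

lemma two_le_ceil {β : ℕ → ℝ} (hβ : IsCantorBase β) (n : ℕ) : (2 : ℤ) ≤ ⌈β n⌉ := by
  have h2 : (1 : ℤ) < ⌈β n⌉ := Int.lt_ceil.mpr (by exact_mod_cast hβ.one_lt n)
  omega

lemma xterm_nonneg {β : ℕ → ℝ} (hβ : IsCantorBase β) (n : ℕ) : 0 ≤ xterm β n := by
  have h1 : ((2:ℤ) : ℝ) ≤ ((⌈β n⌉ : ℤ) : ℝ) := by exact_mod_cast two_le_ceil hβ n
  exact div_nonneg (by push_cast at h1 ⊢; linarith) (prodUpTo_pos hβ n).le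

lemma xterm_shift {β : ℕ → ℝ} (hβ : IsCantorBase β) (n m : ℕ) :
    xterm (shiftBase β n) m = prodQ β n * xterm β (n + m) := by
  have hP := prodQ_pos hβ n
  have h := prodUpTo_shift (β := β) n m
  have hs : shiftBase β n m = β (n + m) := rfl
  have hP' := prodUpTo_pos (isCantorBase_shift hβ n) m
  have hPm := prodUpTo_pos hβ (n + m)
  rw [xterm, xterm, hs]
  field_simp
  linear_combination (1 - (⌈β (n + m)⌉ : ℝ)) * h

lemma xbsummable_shift {β : ℕ → ℝ} (hβ : IsCantorBase β) (hx : XBSummable β) (n : ℕ) :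
    XBSummable (shiftBase β n) := by
  have h0 : Summable (fun m => xterm β (n + m)) := by
    have := (summable_nat_add_iff (f := fun m => xterm β m) n).mpr hx
    simpa [Nat.add_comm] using this
  have h1 := h0.mul_left (prodQ β n)
  have : (fun m => prodQ β n * xterm β (n + m)) = fun m => xterm (shiftBase β n) m :=
    funext fun m => (xterm_shift hβ n m).symm
  rw [this] at h1
  exact h1

lemma xB_shift_eq {β : ℕ → ℝ} (hβ : IsCantorBase β) (n : ℕ) :
    xB (shiftBase β n) = prodQ β n * ∑' m, xterm β (n + m) := by
  rw [xB, ← tsum_mul_left]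
  exact tsum_congr fun m => xterm_shift hβ n m

lemma xB_nonneg {β : ℕ → ℝ} (hβ : IsCantorBase β) (n : ℕ) : 0 ≤ xB (shiftBase β n) := by
  rw [xB_shift_eq hβ n]
  exact mul_nonneg (prodQ_pos hβ n).le (tsum_nonneg fun m => xterm_nonneg hβ (n + m))

/-- shift of a word -/
def wordShift (a : ℕ → ℤ) (n : ℕ) : ℕ → ℤ := fun m => a (n + m)

lemma wordShift_zero (a : ℕ → ℤ) : wordShift a 0 = a := funext fun m => by simp [wordShift]

lemma wordShift_wordShift (a : ℕ → ℤ) (n m : ℕ) :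
    wordShift (wordShift a n) m = wordShift a (n + m) :=
  funext fun k => by simp [wordShift, Nat.add_assoc]

lemma xB_eq_valB (β : ℕ → ℝ) : xB β = valB β (fun n => ⌈β n⌉ - 1) := by
  refine tsum_congr fun n => ?_
  push_cast
  rfl

lemma validWord_max {β : ℕ → ℝ} (hβ : IsCantorBase β) :
    validWord β (fun n => ⌈β n⌉ - 1) := fun n =>
  ⟨by have := two_le_ceil hβ n; simp only; omega, le_refl _⟩

lemma validWord_shift {β : ℕ → ℝ} {a : ℕ → ℤ} (ha : validWord β a) (n : ℕ) :
    validWord (shiftBase β n) (wordShift a n) := fun m => ha (n + m)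

section valB
variable {β : ℕ → ℝ} {a : ℕ → ℤ}

lemma digit_cast_nonneg (ha : validWord β a) (n : ℕ) : (0:ℝ) ≤ (a n : ℝ) := by
  exact_mod_cast (ha n).1

lemma digit_cast_le (ha : validWord β a) (n : ℕ) : (a n : ℝ) ≤ (⌈β n⌉ : ℝ) - 1 := by
  have := (ha n).2
  push_cast
  exact_mod_cast this

lemma valB_term_le (hβ : IsCantorBase β) (ha : validWord β a) (n : ℕ) :
    (a n : ℝ) / prodUpTo β n ≤ xterm β n := by
  rw [xterm]
  have := prodUpTo_pos hβ n
  gcongr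
  exact digit_cast_le ha n

lemma summable_valB (hβ : IsCantorBase β) (hx : XBSummable β) (ha : validWord β a) :
    Summable (fun n => (a n : ℝ) / prodUpTo β n) :=
  Summable.of_nonneg_of_le
    (fun n => div_nonneg (digit_cast_nonneg ha n) (prodUpTo_pos hβ n).le)
    (fun n => valB_term_le hβ ha n) hx

lemma valB_nonneg (hβ : IsCantorBase β) (ha : validWord β a) : 0 ≤ valB β a :=
  tsum_nonneg fun n => div_nonneg (digit_cast_nonneg ha n) (prodUpTo_pos hβ n).le

lemma valB_le_xB (hβ : IsCantorBase β) (hx : XBSummable β) (ha : validWord β a) :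
    valB β a ≤ xB β :=
  Summable.tsum_le_tsum (fun n => valB_term_le hβ ha n) (summable_valB hβ hx ha) hx

lemma valB_rec (hβ : IsCantorBase β) (hx : XBSummable β) (ha : validWord β a) :
    β 0 * valB β a = (a 0 : ℝ) + valB (shiftBase β 1) (wordShift a 1) := by
  have hsum := summable_valB hβ hx ha
  have hsplit := Summable.tsum_eq_zero_add hsum
  have hP : ∀ n : ℕ, prodUpTo β (n + 1) = β 0 * prodUpTo (shiftBase β 1) n := by
    intro n
    rw [show n + 1 = 1 + n from Nat.add_comm n 1, ← prodUpTo_shift 1 n,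
      show prodQ β 1 = β 0 from by simp [prodQ]]
  have hβ0 : β 0 ≠ 0 := by have := hβ.one_lt 0; linarith
  have h2 : ∑' n : ℕ, (a (n + 1) : ℝ) / prodUpTo β (n + 1)
      = (1 / β 0) * valB (shiftBase β 1) (wordShift a 1) := by
    rw [valB, ← tsum_mul_left]
    refine tsum_congr fun n => ?_
    rw [hP n, wordShift, show 1 + n = n + 1 from Nat.add_comm 1 n,
      div_mul_eq_mul_div, one_mul, div_div, mul_comm (β 0)]
  rw [valB, hsplit, h2]
  have hp0 : prodUpTo β 0 = β 0 := by simp [prodUpTo]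
  rw [hp0]
  field_simp

lemma valB_partial (hβ : IsCantorBase β) (hx : XBSummable β) (ha : validWord β a) :
    ∀ k, valB β a = (∑ i ∈ Finset.range k, (a i : ℝ) / prodUpTo β i)
      + valB (shiftBase β k) (wordShift a k) / prodQ β k := by
  intro k
  induction k with
  | zero => simp [prodQ, shiftBase_zero, wordShift_zero]
  | succ k ih =>
    rw [ih, Finset.sum_range_succ]
    have hrec := valB_rec (isCantorBase_shift hβ k) (xbsummable_shift hβ hx k)
      (validWord_shift ha k)
    rw [shiftBase_shiftBase, wordShift_wordShift] at hrec
    have hbk : shiftBase β k 0 = β k := by simp [shiftBase]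
    have hwk : wordShift a k 0 = a k := by simp [wordShift]
    rw [hbk, hwk] at hrec
    have hβk : (0:ℝ) < β k := lt_trans one_pos (hβ.one_lt k)
    have hQk : (0:ℝ) < prodQ β k := prodQ_pos hβ k
    have hQk1 : prodQ β (k + 1) = prodQ β k * β k := by
      rw [prodQ, prodQ, Finset.prod_range_succ]
    have hPk : prodUpTo β k = prodQ β (k + 1) := rfl
    have : valB (shiftBase β k) (wordShift a k) = ((a k : ℝ) + valB (shiftBase β (k+1)) (wordShift a (k+1))) / β k := by
      field_simp
      linarith [hrec]
    rw [this, hPk, hQk1]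
    field_simp
    ring

lemma xB_partial (hβ : IsCantorBase β) (hx : XBSummable β) (k : ℕ) :
    xB β = (∑ i ∈ Finset.range k, xterm β i) + xB (shiftBase β k) / prodQ β k := by
  have h := valB_partial hβ hx (validWord_max hβ) k
  rw [← xB_eq_valB] at h
  have h2 : valB (shiftBase β k) (wordShift (fun n => ⌈β n⌉ - 1) k)
      = xB (shiftBase β k) := by
    rw [xB_eq_valB]
    refine tsum_congr fun n => ?_
    simp [wordShift, shiftBase]
  rw [h2] at h
  rw [h]
  congr 1
  refine Finset.sum_congr rfl fun i _ => ?_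
  rw [xterm]
  push_cast
  rfl

lemma xB_rec (hβ : IsCantorBase β) (hx : XBSummable β) (n : ℕ) :
    β n * xB (shiftBase β n) = ((⌈β n⌉ : ℝ) - 1) + xB (shiftBase β (n + 1)) := by
  have h := valB_rec (isCantorBase_shift hβ n) (xbsummable_shift hβ hx n)
    (validWord_max (isCantorBase_shift hβ n))
  rw [← xB_eq_valB, shiftBase_shiftBase] at h
  have hb : shiftBase β n 0 = β n := by simp [shiftBase]
  have h2 : valB (shiftBase β (n + 1)) (wordShift (fun m => ⌈shiftBase β n m⌉ - 1) 1)
      = xB (shiftBase β (n + 1)) := by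
    rw [xB_eq_valB]
    refine tsum_congr fun m => ?_
    simp only [wordShift, shiftBase]
    rw [show n + 1 + m = n + (1 + m) from by omega]
  rw [hb, h2] at h
  push_cast at h ⊢
  exact h

lemma tail_tendsto_zero (hβ : IsCantorBase β) (hx : XBSummable β) :
    Tendsto (fun k => xB (shiftBase β k) / prodQ β k) atTop (nhds 0) := by
  have h : ∀ k, xB (shiftBase β k) / prodQ β k = ∑' m, xterm β (k + m) := by
    intro k
    rw [xB_shift_eq hβ k, mul_comm, mul_div_assoc,
      div_self (ne_of_gt (prodQ_pos hβ k)), mul_one]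
  rw [funext h]
  have := tendsto_sum_nat_add (f := xterm β)
  convert this using 2 with k
  exact tsum_congr fun m => by rw [Nat.add_comm]

lemma inv_prodQ_tendsto_zero (hβ : IsCantorBase β) :
    Tendsto (fun k => 1 / prodQ β k) atTop (nhds 0) :=
  tendsto_const_nhds.div_atTop hβ.prod_tendsto

end valB
section lazy

/-- the state sequence of the lazy expansion: `x, s_0(x), s_1(x), …` -/
noncomputable def lazyState (β : ℕ → ℝ) (x : ℝ) : ℕ → ℝ
  | 0 => x
  | n + 1 => lazyS β x n

variable {β : ℕ → ℝ}

lemma lazyDigit_eq (β : ℕ → ℝ) (x : ℝ) (n : ℕ) :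
    lazyDigit β x n = ⌈β n * lazyState β x n - xB (shiftBase β (n + 1))⌉ := by
  cases n with
  | zero => rfl
  | succ n => rfl

lemma lazyState_succ (β : ℕ → ℝ) (x : ℝ) (n : ℕ) :
    lazyState β x (n + 1) = β n * lazyState β x n - (lazyDigit β x n : ℝ) := by
  cases n with
  | zero => rfl
  | succ n => rfl

lemma lazy_step (hβ : IsCantorBase β) (hx : XBSummable β) {n : ℕ} {y : ℝ}
    (hy : y ∈ Set.Ioc (xB (shiftBase β n) - 1) (xB (shiftBase β n))) :
    (0 ≤ ⌈β n * y - xB (shiftBase β (n + 1))⌉ ∧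
      ⌈β n * y - xB (shiftBase β (n + 1))⌉ ≤ ⌈β n⌉ - 1) ∧
    β n * y - (⌈β n * y - xB (shiftBase β (n + 1))⌉ : ℝ) ∈
      Set.Ioc (xB (shiftBase β (n + 1)) - 1) (xB (shiftBase β (n + 1))) := by
  obtain ⟨h2, h1⟩ := hy
  have hrec := xB_rec hβ hx n
  have hb : (1 : ℝ) < β n := hβ.one_lt n
  have hbc : β n ≤ (⌈β n⌉ : ℝ) := Int.le_ceil (β n)
  set T' := xB (shiftBase β (n + 1)) with hT'
  have hub : β n * y - T' ≤ (⌈β n⌉ : ℝ) - 1 := by nlinarith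
  have hlb : (-1 : ℝ) < β n * y - T' := by nlinarith
  refine ⟨⟨?_, ?_⟩, ?_, ?_⟩
  · have : (-1 : ℤ) < ⌈β n * y - T'⌉ := Int.lt_ceil.mpr (by exact_mod_cast hlb)
    omega
  · have : ⌈β n * y - T'⌉ ≤ ⌈β n⌉ - 1 := Int.ceil_le.mpr (by push_cast; linarith)
    exact this
  · have := Int.ceil_lt_add_one (β n * y - T')
    linarith
  · have := Int.le_ceil (β n * y - T')
    linarith

lemma lazy_mem (hβ : IsCantorBase β) (hx : XBSummable β) {x : ℝ}
    (hxm : x ∈ Set.Ioc (xB β - 1) (xB β)) (n : ℕ) :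
    lazyState β x n ∈ Set.Ioc (xB (shiftBase β n) - 1) (xB (shiftBase β n)) := by
  induction n with
  | zero => rw [shiftBase_zero]; exact hxm
  | succ n ih =>
    have h := (lazy_step hβ hx ih).2
    rwa [lazyState_succ, lazyDigit_eq]

lemma lazy_valid (hβ : IsCantorBase β) (hx : XBSummable β) {x : ℝ}
    (hxm : x ∈ Set.Ioc (xB β - 1) (xB β)) : validWord β (lazyDigit β x) := by
  intro n
  have h := (lazy_step hβ hx (lazy_mem hβ hx hxm n)).1
  rw [lazyDigit_eq]
  exact h

lemma lazy_shift_one (β : ℕ → ℝ) (x : ℝ) : ∀ m,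
    lazyDigit (shiftBase β 1) (lazyS β x 0) m = lazyDigit β x (m + 1) ∧
    lazyS (shiftBase β 1) (lazyS β x 0) m = lazyS β x (m + 1) := by
  intro m
  induction m with
  | zero =>
    constructor
    · show (⌈shiftBase β 1 0 * lazyS β x 0 - xB (shiftBase (shiftBase β 1) 1)⌉ : ℤ) = _
      rw [shiftBase_shiftBase]
      rfl
    · show shiftBase β 1 0 * lazyS β x 0 -
          (⌈shiftBase β 1 0 * lazyS β x 0 - xB (shiftBase (shiftBase β 1) 1)⌉ : ℝ) = _
      rw [shiftBase_shiftBase]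
      rfl
  | succ m ih =>
    obtain ⟨ihd, ihs⟩ := ih
    constructor
    · show (⌈shiftBase β 1 (m + 1) * lazyS (shiftBase β 1) (lazyS β x 0) m -
          xB (shiftBase (shiftBase β 1) (m + 2))⌉ : ℤ) = _
      rw [shiftBase_shiftBase, ihs]
      show (⌈β (1 + (m + 1)) * lazyS β x (m + 1) - xB (shiftBase β (1 + (m + 2)))⌉ : ℤ) = _
      rw [show 1 + (m + 1) = m + 1 + 1 from by omega, show 1 + (m + 2) = m + 1 + 2 from by omega]
      rfl
    · show shiftBase β 1 (m + 1) * lazyS (shiftBase β 1) (lazyS β x 0) m -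
          (⌈shiftBase β 1 (m + 1) * lazyS (shiftBase β 1) (lazyS β x 0) m -
            xB (shiftBase (shiftBase β 1) (m + 2))⌉ : ℝ) = _
      rw [shiftBase_shiftBase, ihs]
      show β (1 + (m + 1)) * lazyS β x (m + 1) -
          (⌈β (1 + (m + 1)) * lazyS β x (m + 1) - xB (shiftBase β (1 + (m + 2)))⌉ : ℝ) = _
      rw [show 1 + (m + 1) = m + 1 + 1 from by omega, show 1 + (m + 2) = m + 1 + 2 from by omega]
      rfl

lemma lazy_shift (β : ℕ → ℝ) (x : ℝ) : ∀ n m,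
    lazyDigit (shiftBase β n) (lazyState β x n) m = lazyDigit β x (n + m) ∧
    lazyS (shiftBase β n) (lazyState β x n) m = lazyS β x (n + m) := by
  intro n
  induction n with
  | zero =>
    intro m
    rw [shiftBase_zero]
    exact ⟨by rw [Nat.zero_add]; rfl, by rw [Nat.zero_add]; rfl⟩
  | succ n ih =>
    intro m
    have h1 := lazy_shift_one (shiftBase β n) (lazyState β x n) m
    rw [shiftBase_shiftBase] at h1
    have hs0 : lazyS (shiftBase β n) (lazyState β x n) 0 = lazyS β x n := by
      have := (ih 0).2
      rwa [Nat.add_zero] at this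
    have hstate : lazyState (shiftBase β n) (lazyState β x n) 0 = lazyState β x n := rfl
    have hls : lazyS (shiftBase β n) (lazyState β x n) 0 = lazyState β x (n + 1) := by
      rw [hs0]; rfl
    rw [hls] at h1
    obtain ⟨h1d, h1s⟩ := h1
    constructor
    · rw [h1d, (ih (m + 1)).1, show n + (m + 1) = n + 1 + m from by omega]
    · rw [h1s, (ih (m + 1)).2, show n + (m + 1) = n + 1 + m from by omega]

lemma lazy_partial (hβ : IsCantorBase β) (x : ℝ) : ∀ n,
    x = (∑ i ∈ Finset.range n, (lazyDigit β x i : ℝ) / prodUpTo β i)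
      + lazyState β x n / prodQ β n := by
  intro n
  induction n with
  | zero => simp [prodQ, lazyState]
  | succ n ih =>
    rw [Finset.sum_range_succ]
    have hQ : prodQ β (n + 1) = prodQ β n * β n := by
      rw [prodQ, prodQ, Finset.prod_range_succ]
    have hQn := prodQ_pos hβ n
    have hbn : (0:ℝ) < β n := lt_trans one_pos (hβ.one_lt n)
    have hP : prodUpTo β n = prodQ β n * β n := by rw [prodUpTo_eq, hQ]
    have e1 : lazyState β x (n + 1) / prodQ β (n + 1)
        = lazyState β x n / prodQ β n - (lazyDigit β x n : ℝ) / prodUpTo β n := by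
      rw [lazyState_succ, hQ, hP]
      field_simp
    rw [e1]
    linarith [ih]

lemma lazy_state_div_tendsto (hβ : IsCantorBase β) (hx : XBSummable β) {x : ℝ}
    (hxm : x ∈ Set.Ioc (xB β - 1) (xB β)) :
    Tendsto (fun n => lazyState β x n / prodQ β n) atTop (nhds 0) := by
  have hub : ∀ n, lazyState β x n / prodQ β n ≤ xB (shiftBase β n) / prodQ β n := by
    intro n
    have h := prodQ_pos hβ n
    gcongr
    exact (lazy_mem hβ hx hxm n).2
  have hlb : ∀ n, xB (shiftBase β n) / prodQ β n - 1 / prodQ β n ≤ lazyState β x n / prodQ β n := by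
    intro n
    rw [div_sub_div_same]
    have h := prodQ_pos hβ n
    gcongr
    linarith [(lazy_mem hβ hx hxm n).1]
  have h1 := tail_tendsto_zero hβ hx
  have h2 := inv_prodQ_tendsto_zero hβ
  have h3 : Tendsto (fun n => xB (shiftBase β n) / prodQ β n - 1 / prodQ β n) atTop (nhds 0) := by
    have := h1.sub h2
    simpa using this
  exact tendsto_of_tendsto_of_tendsto_of_le_of_le h3 h1 hlb hub

lemma lazy_val (hβ : IsCantorBase β) (hx : XBSummable β) {x : ℝ}
    (hxm : x ∈ Set.Ioc (xB β - 1) (xB β)) : valB β (lazyDigit β x) = x := by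
  have hsum := summable_valB hβ hx (lazy_valid hβ hx hxm)
  have hpartial : Tendsto (fun n => ∑ i ∈ Finset.range n, (lazyDigit β x i : ℝ) / prodUpTo β i)
      atTop (nhds x) := by
    have h : ∀ n, ∑ i ∈ Finset.range n, (lazyDigit β x i : ℝ) / prodUpTo β i
        = x - lazyState β x n / prodQ β n := by
      intro n
      have := lazy_partial hβ x n
      linarith
    rw [funext h]
    have := (tendsto_const_nhds (x := x) (f := atTop (α := ℕ))).sub
      (lazy_state_div_tendsto hβ hx hxm)
    simpa using this
  exact ((hsum.hasSum_iff_tendsto_nat).mpr hpartial).tsum_eq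

end lazy
section lex

lemma lexLt_asymm {a b : ℕ → ℤ} (h1 : lexLt a b) (h2 : lexLt b a) : False := by
  obtain ⟨k1, hk1, hlt1⟩ := h1
  obtain ⟨k2, hk2, hlt2⟩ := h2
  rcases lt_trichotomy k1 k2 with h | h | h
  · have := hk2 k1 h; omega
  · subst h; omega
  · have := hk1 k2 h; omega

lemma lexLt_total {a b : ℕ → ℤ} (h : a ≠ b) : lexLt a b ∨ lexLt b a := by
  have hne : ∃ k, a k ≠ b k := by
    by_contra hc
    push_neg at hc
    exact h (funext hc)
  classical
  set k := Nat.find hne with hk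
  have hmin : ∀ i < k, a i = b i := by
    intro i hi
    have := Nat.find_min hne hi
    omega
  have hkk : a k ≠ b k := Nat.find_spec hne
  rcases lt_or_gt_of_ne hkk with h | h
  · exact Or.inl ⟨k, hmin, h⟩
  · exact Or.inr ⟨k, fun i hi => (hmin i hi).symm, h⟩

lemma lexLe_lexLt_trans {a b c : ℕ → ℤ} (h1 : lexLe a b) (h2 : lexLt b c) : lexLt a c := by
  rcases h1 with h1 | rfl
  · obtain ⟨k1, hk1, hlt1⟩ := h1
    obtain ⟨k2, hk2, hlt2⟩ := h2
    rcases lt_trichotomy k1 k2 with h | h | h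
    · exact ⟨k1, fun i hi => (hk1 i hi).trans (hk2 i (lt_trans hi h)), by
        have := hk2 k1 h; omega⟩
    · subst h
      exact ⟨k1, fun i hi => (hk1 i hi).trans (hk2 i hi), by omega⟩
    · exact ⟨k2, fun i hi => (hk1 i (lt_trans hi h)).trans (hk2 i hi), by
        have := hk1 k2 h; omega⟩
  · exact h2

lemma lexLt_of_le_of_ne {a b : ℕ → ℤ} (hle : ∀ i, a i ≤ b i) (hne : a ≠ b) : lexLt a b := by
  rcases lexLt_total hne with h | h
  · exact h
  · obtain ⟨k, hk, hlt⟩ := h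
    exact absurd (hle k) (by omega)

end lex

section mono

variable {β : ℕ → ℝ}

lemma lazy_lt_of_lt (hβ : IsCantorBase β) (hx : XBSummable β) {x y : ℝ}
    (hxm : x ∈ Set.Ioc (xB β - 1) (xB β)) (hym : y ∈ Set.Ioc (xB β - 1) (xB β))
    (hxy : x < y) : lexLt (lazyDigit β x) (lazyDigit β y) := by
  classical
  have hvx := lazy_val hβ hx hxm
  have hvy := lazy_val hβ hx hym
  have hne : lazyDigit β x ≠ lazyDigit β y := by
    intro h
    rw [← hvx, ← hvy, h] at hxy
    exact lt_irrefl _ hxy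
  have hex : ∃ k, lazyDigit β x k ≠ lazyDigit β y k := by
    by_contra hc
    push_neg at hc
    exact hne (funext hc)
  set k := Nat.find hex with hk
  have hmin : ∀ i < k, lazyDigit β x i = lazyDigit β y i := by
    intro i hi
    have := Nat.find_min hex hi
    omega
  have hkk : lazyDigit β x k ≠ lazyDigit β y k := Nat.find_spec hex
  -- states at k
  have hs : lazyState β x k < lazyState β y k := by
    have h1 := lazy_partial hβ x k
    have h2 := lazy_partial hβ y k
    have hsum : ∑ i ∈ Finset.range k, (lazyDigit β x i : ℝ) / prodUpTo β i
        = ∑ i ∈ Finset.range k, (lazyDigit β y i : ℝ) / prodUpTo β i := by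
      refine Finset.sum_congr rfl fun i hi => ?_
      rw [hmin i (Finset.mem_range.mp hi)]
    have hQ := prodQ_pos hβ k
    rw [hsum] at h1
    have : lazyState β x k / prodQ β k < lazyState β y k / prodQ β k := by linarith
    exact (div_lt_div_iff_of_pos_right hQ).mp this
  have hdig : lazyDigit β x k ≤ lazyDigit β y k := by
    rw [lazyDigit_eq β x k, lazyDigit_eq β y k]
    apply Int.ceil_le_ceil
    have hb : (0:ℝ) < β k := lt_trans one_pos (hβ.one_lt k)
    nlinarith
  exact ⟨k, hmin, lt_of_le_of_ne hdig hkk⟩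

end mono
section lstar

variable {β : ℕ → ℝ} {ℓstar : ℕ → ℕ → ℤ}

/-- closeness of values of words agreeing on a prefix -/
lemma valB_prefix_close {γ : ℕ → ℝ} (hγ : IsCantorBase γ) (hxγ : XBSummable γ)
    {w w' : ℕ → ℤ} (hw : validWord γ w) (hw' : validWord γ w') (K : ℕ)
    (hagree : ∀ i < K, w i = w' i) :
    |valB γ w - valB γ w'| ≤ xB (shiftBase γ K) / prodQ γ K := by
  have h1 := valB_partial hγ hxγ hw K
  have h2 := valB_partial hγ hxγ hw' K
  have hsums : ∑ i ∈ Finset.range K, (w i : ℝ) / prodUpTo γ i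
      = ∑ i ∈ Finset.range K, (w' i : ℝ) / prodUpTo γ i :=
    Finset.sum_congr rfl fun i hi => by rw [hagree i (Finset.mem_range.mp hi)]
  have hQ := prodQ_pos hγ K
  have hV1 : valB (shiftBase γ K) (wordShift w K) ∈
      Set.Icc 0 (xB (shiftBase γ K)) :=
    ⟨valB_nonneg (isCantorBase_shift hγ K) (validWord_shift hw K),
     valB_le_xB (isCantorBase_shift hγ K) (xbsummable_shift hγ hxγ K) (validWord_shift hw K)⟩
  have hV2 : valB (shiftBase γ K) (wordShift w' K) ∈
      Set.Icc 0 (xB (shiftBase γ K)) :=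
    ⟨valB_nonneg (isCantorBase_shift hγ K) (validWord_shift hw' K),
     valB_le_xB (isCantorBase_shift hγ K) (xbsummable_shift hγ hxγ K) (validWord_shift hw' K)⟩
  have hdiff : valB γ w - valB γ w'
      = (valB (shiftBase γ K) (wordShift w K) - valB (shiftBase γ K) (wordShift w' K))
        / prodQ γ K := by
    rw [h1, h2, hsums]
    ring
  rw [hdiff, abs_div, abs_of_pos hQ]
  gcongr
  rw [abs_le]
  constructor
  · linarith [hV1.1, hV1.2, hV2.1, hV2.2]
  · linarith [hV1.1, hV1.2, hV2.1, hV2.2]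

lemma lstar_prefix
    (hl : ∀ n : ℕ, Tendsto (lazyDigit (shiftBase β n))
      (nhdsWithin (xB (shiftBase β n) - 1) (Set.Ioi (xB (shiftBase β n) - 1)))
      (nhds (ℓstar n))) (n K : ℕ) :
    ∀ᶠ t in nhdsWithin (xB (shiftBase β n) - 1) (Set.Ioi (xB (shiftBase β n) - 1)),
      ∀ i < K, lazyDigit (shiftBase β n) t i = ℓstar n i := by
  have h := tendsto_pi_nhds.mp (hl n)
  have h2 : ∀ i : ℕ, ∀ᶠ t in nhdsWithin (xB (shiftBase β n) - 1)
      (Set.Ioi (xB (shiftBase β n) - 1)), lazyDigit (shiftBase β n) t i = ℓstar n i := by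
    intro i
    have hsing : {ℓstar n i} ∈ nhds (ℓstar n i) := by simp [nhds_discrete]
    filter_upwards [h i hsing] with t ht using ht
  have := (Filter.eventually_all_finset (Finset.range K)
    (p := fun i t => lazyDigit (shiftBase β n) t i = ℓstar n i)).mpr (fun i _ => h2 i)
  filter_upwards [this] with t ht i hi using ht i (Finset.mem_range.mpr hi)

lemma exists_good_t {β : ℕ → ℝ} (hβ : IsCantorBase β) (hx : XBSummable β) (n : ℕ) {s : ℝ}
    (hs : xB (shiftBase β n) - 1 < s)
    {E : Set ℝ} (hE : E ∈ nhdsWithin (xB (shiftBase β n) - 1)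
      (Set.Ioi (xB (shiftBase β n) - 1))) :
    ∃ t, t ∈ E ∧ xB (shiftBase β n) - 1 < t ∧ t < s := by
  have hIoo : Set.Ioo (xB (shiftBase β n) - 1) s ∈ nhdsWithin (xB (shiftBase β n) - 1)
      (Set.Ioi (xB (shiftBase β n) - 1)) :=
    Ioo_mem_nhdsGT_of_mem ⟨le_refl _, hs⟩
  obtain ⟨t, ht1, ht2⟩ := Filter.nonempty_of_mem (Filter.inter_mem hE hIoo)
  exact ⟨t, ht1, ht2.1, ht2.2⟩

variable (hβ : IsCantorBase β) (hx : XBSummable β)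
variable (hl : ∀ n : ℕ, Tendsto (lazyDigit (shiftBase β n))
      (nhdsWithin (xB (shiftBase β n) - 1) (Set.Ioi (xB (shiftBase β n) - 1)))
      (nhds (ℓstar n)))

include hβ hx hl

lemma lstar_valid (n : ℕ) : validWord (shiftBase β n) (ℓstar n) := by
  intro i
  obtain ⟨t, htE, ht1, ht2⟩ := exists_good_t hβ hx n
    (show xB (shiftBase β n) - 1 < xB (shiftBase β n) from by linarith)
    (lstar_prefix hl n (i + 1))
  have hval := lazy_valid (isCantorBase_shift hβ n) (xbsummable_shift hβ hx n)
    (show t ∈ Set.Ioc (xB (shiftBase β n) - 1) (xB (shiftBase β n)) from ⟨ht1, ht2.le⟩) i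
  rwa [htE i (Nat.lt_succ_self i)] at hval

lemma lstar_le_lazy (n : ℕ) {t : ℝ}
    (ht : t ∈ Set.Ioc (xB (shiftBase β n) - 1) (xB (shiftBase β n))) :
    lexLe (ℓstar n) (lazyDigit (shiftBase β n) t) := by
  by_contra hcon
  have hne : ℓstar n ≠ lazyDigit (shiftBase β n) t := by
    intro h
    exact hcon (Or.inr h)
  have hlt : lexLt (lazyDigit (shiftBase β n) t) (ℓstar n) := by
    rcases lexLt_total hne with h | h
    · exact absurd (Or.inl h) hcon
    · exact h
  obtain ⟨k, hk, hklt⟩ := hlt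
  obtain ⟨t', ht'E, ht'1, ht'2⟩ := exists_good_t hβ hx n ht.1 (lstar_prefix hl n (k + 1))
  have ht'mem : t' ∈ Set.Ioc (xB (shiftBase β n) - 1) (xB (shiftBase β n)) :=
    ⟨ht'1, le_trans ht'2.le ht.2⟩
  have hmono := lazy_lt_of_lt (isCantorBase_shift hβ n) (xbsummable_shift hβ hx n)
    ht'mem ht ht'2
  obtain ⟨j, hj, hjlt⟩ := hmono
  rcases lt_trichotomy j k with h | h | h
  · have e1 := ht'E j (by omega)
    have e2 := hk j h
    omega
  · subst h
    have e1 := ht'E j (by omega)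
    omega
  · have e1 := ht'E k (by omega)
    have e2 := hj k h
    omega

lemma lstar_lt_lazy (n : ℕ) {t : ℝ}
    (ht : t ∈ Set.Ioc (xB (shiftBase β n) - 1) (xB (shiftBase β n))) :
    lexLt (ℓstar n) (lazyDigit (shiftBase β n) t) := by
  obtain ⟨t', ht'E, ht'1, ht'2⟩ := exists_good_t hβ hx n ht.1
    (Filter.univ_mem (f := nhdsWithin (xB (shiftBase β n) - 1)
      (Set.Ioi (xB (shiftBase β n) - 1))))
  have ht'mem : t' ∈ Set.Ioc (xB (shiftBase β n) - 1) (xB (shiftBase β n)) :=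
    ⟨ht'1, le_trans ht'2.le ht.2⟩
  exact lexLe_lexLt_trans (lstar_le_lazy hβ hx hl n ht'mem)
    (lazy_lt_of_lt (isCantorBase_shift hβ n) (xbsummable_shift hβ hx n) ht'mem ht ht'2)

lemma lstar_val (n : ℕ) :
    valB (shiftBase β n) (ℓstar n) = xB (shiftBase β n) - 1 := by
  set γ := shiftBase β n with hγdef
  have hγ := isCantorBase_shift hβ n
  have hxγ := xbsummable_shift hβ hx n
  set v := valB γ (ℓstar n) with hv
  set w := xB γ - 1 with hw
  have key : ∀ ε : ℝ, 0 < ε → |v - w| ≤ ε := by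
    intro ε hε
    have htail := tail_tendsto_zero hγ hxγ
    have hev : ∀ᶠ K in atTop, xB (shiftBase γ K) / prodQ γ K < ε / 2 :=
      htail.eventually_lt_const (by linarith)
    obtain ⟨K, hK⟩ := hev.exists
    obtain ⟨t, htE, ht1, ht2⟩ := exists_good_t hβ hx n
      (show xB (shiftBase β n) - 1 < min (xB (shiftBase β n) - 1 + ε / 2) (xB (shiftBase β n))
        from lt_min (by linarith) (by linarith))
      (lstar_prefix hl n K)
    have htmem : t ∈ Set.Ioc (xB γ - 1) (xB γ) :=
      ⟨ht1, le_of_lt (lt_of_lt_of_le ht2 (min_le_right _ _))⟩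
    have h1 : |v - valB γ (lazyDigit γ t)| ≤ xB (shiftBase γ K) / prodQ γ K := by
      refine valB_prefix_close hγ hxγ (lstar_valid hβ hx hl n) (lazy_valid hγ hxγ htmem) K ?_
      intro i hi
      exact (htE i hi).symm
    rw [lazy_val hγ hxγ htmem] at h1
    have h2 : |t - w| ≤ ε / 2 := by
      rw [abs_le]
      constructor
      · rw [hw]; linarith
      · have := lt_of_lt_of_le ht2 (min_le_left _ _)
        rw [hw]; linarith
    calc |v - w| ≤ |v - t| + |t - w| := abs_sub_le v t w
      _ ≤ ε / 2 + ε / 2 := add_le_add (le_trans h1 hK.le) h2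
      _ = ε := by ring
  by_contra hne
  have hpos : 0 < |v - w| := abs_pos.mpr (sub_ne_zero.mpr hne)
  have := key (|v - w| / 2) (by linarith)
  linarith

lemma lstar_tail_lt (n K : ℕ) :
    valB (shiftBase β (n + K)) (wordShift (ℓstar n) K) < xB (shiftBase β (n + K)) := by
  set γ := shiftBase β n with hγdef
  have hγ := isCantorBase_shift hβ n
  have hxγ := xbsummable_shift hβ hx n
  have hdecomp := valB_partial hγ hxγ (lstar_valid hβ hx hl n) K
  rw [lstar_val hβ hx hl n] at hdecomp
  obtain ⟨t, htE, ht1, ht2⟩ := exists_good_t hβ hx n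
    (show xB (shiftBase β n) - 1 < xB (shiftBase β n) from by linarith)
    (lstar_prefix hl n K)
  have htmem : t ∈ Set.Ioc (xB γ - 1) (xB γ) := ⟨ht1, ht2.le⟩
  have hpart := lazy_partial hγ t K
  have hsums : ∑ i ∈ Finset.range K, ((lazyDigit γ t i : ℝ)) / prodUpTo γ i
      = ∑ i ∈ Finset.range K, ((ℓstar n i : ℝ)) / prodUpTo γ i :=
    Finset.sum_congr rfl fun i hi => by rw [htE i (Finset.mem_range.mp hi)]
  rw [hsums] at hpart
  have hQ := prodQ_pos hγ K
  have hstate := (lazy_mem hγ hxγ htmem K).2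
  have hlt : valB (shiftBase γ K) (wordShift (ℓstar n) K) < lazyState γ t K := by
    have hdiff : t - (xB γ - 1)
        = (lazyState γ t K - valB (shiftBase γ K) (wordShift (ℓstar n) K)) / prodQ γ K := by
      rw [sub_div]
      linarith [hpart, hdecomp]
    have htpos : 0 < t - (xB γ - 1) := by linarith
    rw [hdiff] at htpos
    have := (div_pos_iff.mp htpos)
    rcases this with ⟨h1, _⟩ | ⟨_, h2⟩
    · linarith
    · linarith
  have hfin : valB (shiftBase γ K) (wordShift (ℓstar n) K) < xB (shiftBase γ K) :=
    lt_of_lt_of_le hlt hstate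
  rwa [hγdef, shiftBase_shiftBase] at hfin

end lstar
section converse

variable {β : ℕ → ℝ} {ℓstar : ℕ → ℕ → ℤ} {a : ℕ → ℤ}
variable (hβ : IsCantorBase β) (hx : XBSummable β)
variable (hl : ∀ n : ℕ, Tendsto (lazyDigit (shiftBase β n))
      (nhdsWithin (xB (shiftBase β n) - 1) (Set.Ioi (xB (shiftBase β n) - 1)))
      (nhds (ℓstar n)))
variable (ha : validWord β a)
variable (hcond : ∀ n : ℕ, lexLt (ℓstar n) (wordShift a n))

include hβ hx ha

lemma V_decomp (n K : ℕ) : valB (shiftBase β n) (wordShift a n)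
    = (∑ i ∈ Finset.range K, ((a (n + i) : ℝ)) / prodUpTo (shiftBase β n) i)
      + valB (shiftBase β (n + K)) (wordShift a (n + K)) / prodQ (shiftBase β n) K := by
  have h := valB_partial (isCantorBase_shift hβ n) (xbsummable_shift hβ hx n)
    (validWord_shift ha n) K
  rw [shiftBase_shiftBase, wordShift_wordShift] at h
  simpa [wordShift] using h

omit ha
include hl

lemma lstar_decomp (n K : ℕ) : xB (shiftBase β n) - 1
    = (∑ i ∈ Finset.range K, ((ℓstar n i : ℝ)) / prodUpTo (shiftBase β n) i)
      + valB (shiftBase β (n + K)) (wordShift (ℓstar n) K) / prodQ (shiftBase β n) K := by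
  have h := valB_partial (isCantorBase_shift hβ n) (xbsummable_shift hβ hx n)
    (lstar_valid hβ hx hl n) K
  rw [shiftBase_shiftBase, lstar_val hβ hx hl n] at h
  exact h

include ha hcond

lemma chain_step (n : ℕ) : ∃ k : ℕ,
    (xB (shiftBase β n) - 1) - valB (shiftBase β n) (wordShift a n) ≤
      (valB (shiftBase β (n + (k + 1))) (wordShift (ℓstar n) (k + 1)) - 1
        - valB (shiftBase β (n + (k + 1))) (wordShift a (n + (k + 1))))
        / prodQ (shiftBase β n) (k + 1) := by
  obtain ⟨k, hag, hlt⟩ := hcond n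
  refine ⟨k, ?_⟩
  have hA := V_decomp hβ hx ha n (k + 1)
  have hB := lstar_decomp hβ hx hl n (k + 1)
  have hQ := prodQ_pos (isCantorBase_shift hβ n) (k + 1)
  have hPk := prodUpTo_pos (isCantorBase_shift hβ n) k
  have hPQ : prodUpTo (shiftBase β n) k = prodQ (shiftBase β n) (k + 1) := rfl
  have hsum : (∑ i ∈ Finset.range (k + 1), ((ℓstar n i : ℝ)) / prodUpTo (shiftBase β n) i)
      + 1 / prodQ (shiftBase β n) (k + 1)
      ≤ ∑ i ∈ Finset.range (k + 1), ((a (n + i) : ℝ)) / prodUpTo (shiftBase β n) i := by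
    rw [Finset.sum_range_succ, Finset.sum_range_succ]
    have heq : ∑ i ∈ Finset.range k, ((ℓstar n i : ℝ)) / prodUpTo (shiftBase β n) i
        = ∑ i ∈ Finset.range k, ((a (n + i) : ℝ)) / prodUpTo (shiftBase β n) i := by
      refine Finset.sum_congr rfl fun i hi => ?_
      rw [hag i (Finset.mem_range.mp hi)]
      rfl
    have hdig : (ℓstar n k : ℝ) + 1 ≤ (a (n + k) : ℝ) := by
      have : ℓstar n k < a (n + k) := hlt
      exact_mod_cast this
    have : ((ℓstar n k : ℝ)) / prodUpTo (shiftBase β n) k + 1 / prodQ (shiftBase β n) (k + 1)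
        ≤ ((a (n + k) : ℝ)) / prodUpTo (shiftBase β n) k := by
      rw [← hPQ, ← add_div]
      gcongr
    linarith [heq, this]
  rw [sub_div, sub_div]
  linarith [hA, hB, hsum]

lemma V_ge_weak (n : ℕ) :
    xB (shiftBase β n) - 1 ≤ valB (shiftBase β n) (wordShift a n) := by
  classical
  -- the chain function
  have hstep : ∀ m, ∃ m', m < m' ∧
      ((xB (shiftBase β m) - 1) - valB (shiftBase β m) (wordShift a m)) * prodQ β m' ≤
        ((xB (shiftBase β m') - 1) - valB (shiftBase β m') (wordShift a m')) * prodQ β m := by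
    intro m
    obtain ⟨k, hk⟩ := chain_step hβ hx hl ha hcond m
    refine ⟨m + (k + 1), by omega, ?_⟩
    set m' := m + (k + 1) with hm'
    have hy : valB (shiftBase β m') (wordShift (ℓstar m) (k + 1)) ≤ xB (shiftBase β m') :=
      (lstar_tail_lt hβ hx hl m (k + 1)).le
    have hQs := prodQ_pos (isCantorBase_shift hβ m) (k + 1)
    have hQm := prodQ_pos hβ m
    have hQm' := prodQ_pos hβ m'
    have hQQ : prodQ β m * prodQ (shiftBase β m) (k + 1) = prodQ β m' := prodQ_shift m (k + 1)
    have h2 : ((xB (shiftBase β m) - 1) - valB (shiftBase β m) (wordShift a m))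
        * prodQ (shiftBase β m) (k + 1)
        ≤ (xB (shiftBase β m') - 1) - valB (shiftBase β m') (wordShift a m') := by
      have := (le_div_iff₀ hQs).mp hk
      linarith
    calc ((xB (shiftBase β m) - 1) - valB (shiftBase β m) (wordShift a m)) * prodQ β m'
        = (((xB (shiftBase β m) - 1) - valB (shiftBase β m) (wordShift a m))
            * prodQ (shiftBase β m) (k + 1)) * prodQ β m := by rw [← hQQ]; ring
      _ ≤ ((xB (shiftBase β m') - 1) - valB (shiftBase β m') (wordShift a m')) * prodQ β m := by
          exact mul_le_mul_of_nonneg_right h2 hQm.le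
  -- iterate
  choose f hf1 hf2 using hstep
  let g : ℕ → ℕ := fun j => f^[j] n
  have hg0 : g 0 = n := rfl
  have hgsucc : ∀ j, g (j + 1) = f (g j) := fun j => Function.iterate_succ_apply' f j n
  have hgmono : ∀ j, g j < g (j + 1) := fun j => by rw [hgsucc]; exact hf1 (g j)
  have hgge : ∀ j, j ≤ g j := by
    intro j
    induction j with
    | zero => omega
    | succ j ih => have := hgmono j; omega
  have hchain : ∀ j, ((xB (shiftBase β n) - 1) - valB (shiftBase β n) (wordShift a n))
      * prodQ β (g j) ≤
      ((xB (shiftBase β (g j)) - 1) - valB (shiftBase β (g j)) (wordShift a (g j)))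
        * prodQ β n := by
    intro j
    induction j with
    | zero => rw [hg0]
    | succ j ih =>
      have hst := hf2 (g j)
      rw [← hgsucc j] at hst
      have hQgj := prodQ_pos hβ (g j)
      have hQgj1 := prodQ_pos hβ (g (j + 1))
      have hQn := prodQ_pos hβ n
      nlinarith [mul_le_mul_of_nonneg_right ih hQgj1.le,
        mul_le_mul_of_nonneg_right hst hQn.le]
  -- pass to the limit
  rw [← sub_nonpos]
  refine le_of_forall_pos_le_add fun ε hε => ?_
  have hQn := prodQ_pos hβ n
  have htail := tail_tendsto_zero hβ hx
  have hev : ∀ᶠ m in atTop, xB (shiftBase β m) / prodQ β m < ε / prodQ β n :=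
    htail.eventually_lt_const (by positivity)
  obtain ⟨M, hM⟩ := eventually_atTop.mp hev
  have hj := hchain M
  have hgM : M ≤ g M := hgge M
  have htailM := hM (g M) hgM
  have hQg := prodQ_pos hβ (g M)
  -- δ (g M) ≤ xB (shift (g M))
  have hV0 : 0 ≤ valB (shiftBase β (g M)) (wordShift a (g M)) :=
    valB_nonneg (isCantorBase_shift hβ (g M)) (validWord_shift ha (g M))
  have hδ : (xB (shiftBase β (g M)) - 1) - valB (shiftBase β (g M)) (wordShift a (g M))
      ≤ xB (shiftBase β (g M)) := by linarith
  have h1 : ((xB (shiftBase β n) - 1) - valB (shiftBase β n) (wordShift a n)) * prodQ β (g M)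
      ≤ xB (shiftBase β (g M)) * prodQ β n :=
    le_trans hj (mul_le_mul_of_nonneg_right hδ hQn.le)
  have h2 : (xB (shiftBase β n) - 1) - valB (shiftBase β n) (wordShift a n)
      ≤ xB (shiftBase β (g M)) * prodQ β n / prodQ β (g M) := (le_div_iff₀ hQg).mpr h1
  have h3 : xB (shiftBase β (g M)) * prodQ β n / prodQ β (g M)
      = (xB (shiftBase β (g M)) / prodQ β (g M)) * prodQ β n := by ring
  have h4 : (xB (shiftBase β (g M)) / prodQ β (g M)) * prodQ β n ≤ (ε / prodQ β n) * prodQ β n :=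
    mul_le_mul_of_nonneg_right htailM.le hQn.le
  have h5 : (ε / prodQ β n) * prodQ β n = ε := by field_simp
  linarith

lemma V_gt (n : ℕ) :
    xB (shiftBase β n) - 1 < valB (shiftBase β n) (wordShift a n) := by
  obtain ⟨k, hk⟩ := chain_step hβ hx hl ha hcond n
  set m := n + (k + 1) with hm
  have hy : valB (shiftBase β m) (wordShift (ℓstar n) (k + 1)) < xB (shiftBase β m) :=
    lstar_tail_lt hβ hx hl n (k + 1)
  have hweak : xB (shiftBase β m) - 1 ≤ valB (shiftBase β m) (wordShift a m) :=
    V_ge_weak hβ hx hl ha hcond m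
  have hQ := prodQ_pos (isCantorBase_shift hβ n) (k + 1)
  have hnum : valB (shiftBase β m) (wordShift (ℓstar n) (k + 1)) - 1
      - valB (shiftBase β m) (wordShift a m) < 0 := by linarith
  have : (valB (shiftBase β m) (wordShift (ℓstar n) (k + 1)) - 1
      - valB (shiftBase β m) (wordShift a m)) / prodQ (shiftBase β n) (k + 1) < 0 :=
    div_neg_of_neg_of_pos hnum hQ
  linarith


lemma digit_compute (n : ℕ) :
    (⌈β n * valB (shiftBase β n) (wordShift a n) - xB (shiftBase β (n + 1))⌉ : ℤ) = a n := by
  have hrec := valB_rec (isCantorBase_shift hβ n) (xbsummable_shift hβ hx n)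
    (validWord_shift ha n)
  rw [shiftBase_shiftBase, wordShift_wordShift] at hrec
  have hb0 : shiftBase β n 0 = β n := by simp [shiftBase]
  have hw0 : wordShift a n 0 = a n := by simp [wordShift]
  rw [hb0, hw0] at hrec
  have h1 : valB (shiftBase β (n + 1)) (wordShift a (n + 1)) ≤ xB (shiftBase β (n + 1)) :=
    valB_le_xB (isCantorBase_shift hβ (n + 1)) (xbsummable_shift hβ hx (n + 1))
      (validWord_shift ha (n + 1))
  have h2 : xB (shiftBase β (n + 1)) - 1 < valB (shiftBase β (n + 1)) (wordShift a (n + 1)) :=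
    V_gt hβ hx hl ha hcond (n + 1)
  have heq : β n * valB (shiftBase β n) (wordShift a n) - xB (shiftBase β (n + 1))
      = (valB (shiftBase β (n + 1)) (wordShift a (n + 1)) - xB (shiftBase β (n + 1)))
        + (a n : ℝ) := by linarith
  rw [heq, Int.ceil_add_intCast, Int.ceil_eq_zero_iff.mpr ⟨by linarith, by linarith⟩, zero_add]

lemma lazy_of_cond : a ∈ lazySet β := by
  set x := valB β a with hxdef
  have hV0 : valB (shiftBase β 0) (wordShift a 0) = x := by
    rw [shiftBase_zero, wordShift_zero]
  have hxm : x ∈ Set.Ioc (xB β - 1) (xB β) := by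
    constructor
    · have := V_gt hβ hx hl ha hcond 0
      rw [hV0, shiftBase_zero] at this
      exact this
    · exact valB_le_xB hβ hx ha
  -- identify digits
  have hstate : ∀ n, lazyState β x n = valB (shiftBase β n) (wordShift a n) ∧
      lazyDigit β x n = a n := by
    intro n
    induction n with
    | zero =>
      have hs : lazyState β x 0 = valB (shiftBase β 0) (wordShift a 0) := by
        rw [hV0]; rfl
      refine ⟨hs, ?_⟩
      rw [lazyDigit_eq, hs]
      -- digit computation
      exact digit_compute hβ hx hl ha hcond 0
    | succ n ih =>
      obtain ⟨ihs, ihd⟩ := ih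
      have hrec := valB_rec (isCantorBase_shift hβ n) (xbsummable_shift hβ hx n)
        (validWord_shift ha n)
      rw [shiftBase_shiftBase, wordShift_wordShift] at hrec
      have hb0 : shiftBase β n 0 = β n := by simp [shiftBase]
      have hw0 : wordShift a n 0 = a n := by simp [wordShift]
      rw [hb0, hw0] at hrec
      have hs : lazyState β x (n + 1) = valB (shiftBase β (n + 1)) (wordShift a (n + 1)) := by
        rw [lazyState_succ, ihs, ihd]
        linarith [hrec]
      refine ⟨hs, ?_⟩
      rw [lazyDigit_eq, hs]
      exact digit_compute hβ hx hl ha hcond (n + 1)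
  refine ⟨x, hxm, ?_⟩
  funext n
  exact ((hstate n).2).symm

end converse
section closurepart

variable {β : ℕ → ℝ} {ℓstar : ℕ → ℕ → ℤ} {a : ℕ → ℤ}
variable (hβ : IsCantorBase β) (hx : XBSummable β)
variable (hl : ∀ n : ℕ, Tendsto (lazyDigit (shiftBase β n))
      (nhdsWithin (xB (shiftBase β n) - 1) (Set.Ioi (xB (shiftBase β n) - 1)))
      (nhds (ℓstar n)))

include hβ hx hl

/-- forward direction of part 1 -/
lemma cond_of_lazy (h : a ∈ lazySet β) :
    validWord β a ∧ ∀ n : ℕ, lexLt (ℓstar n) (wordShift a n) := by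
  obtain ⟨x, hxm, rfl⟩ := h
  refine ⟨lazy_valid hβ hx hxm, fun n => ?_⟩
  have hws : wordShift (lazyDigit β x) n = lazyDigit (shiftBase β n) (lazyState β x n) :=
    funext fun m => ((lazy_shift β x n m).1).symm
  rw [hws]
  exact lstar_lt_lazy hβ hx hl n (lazy_mem hβ hx hxm n)

omit hβ hx hl

lemma cylinder_mem_nhds (a : ℕ → ℤ) (K : ℕ) :
    {w : ℕ → ℤ | ∀ i < K, w i = a i} ∈ nhds a := by
  induction K with
  | zero => simp
  | succ K ih =>
    have h1 : {w : ℕ → ℤ | w K = a K} ∈ nhds a := by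
      have hopen : IsOpen {w : ℕ → ℤ | w K = a K} := by
        have he : {w : ℕ → ℤ | w K = a K} = (fun w : ℕ → ℤ => w K) ⁻¹' {a K} := rfl
        rw [he]
        exact (isOpen_discrete _).preimage (continuous_apply K)
      exact hopen.mem_nhds rfl
    filter_upwards [ih, h1] with w hw hK i hi
    rcases Nat.lt_succ_iff_lt_or_eq.mp hi with h | h
    · exact hw i h
    · subst h; exact hK

include hβ hx hl

/-- forward direction of part 2 -/
lemma cond_of_closure (h : a ∈ closure (lazySet β)) :
    validWord β a ∧ ∀ n : ℕ, lexLe (ℓstar n) (wordShift a n) := by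
  rw [mem_closure_iff_nhds] at h
  constructor
  · intro n
    obtain ⟨b, hb1, hb2⟩ := h _ (cylinder_mem_nhds a (n + 1))
    have hval := (cond_of_lazy hβ hx hl hb2).1 n
    rwa [hb1 n (by omega)] at hval
  · intro n
    by_contra hcon
    have hne : ℓstar n ≠ wordShift a n := fun h' => hcon (Or.inr h')
    have hlt : lexLt (wordShift a n) (ℓstar n) := by
      rcases lexLt_total hne with h' | h'
      · exact absurd (Or.inl h') hcon
      · exact h'
    obtain ⟨k, hag, hklt⟩ := hlt
    obtain ⟨b, hb1, hb2⟩ := h _ (cylinder_mem_nhds a (n + k + 1))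
    obtain ⟨hbval, hbcond⟩ := cond_of_lazy hβ hx hl hb2
    obtain ⟨j, hj, hjlt⟩ := hbcond n
    have hjlt' : ℓstar n j < b (n + j) := hjlt
    have hag' : ∀ i < k, a (n + i) = ℓstar n i := hag
    have hklt' : a (n + k) < ℓstar n k := hklt
    have hb1' : ∀ i < n + k + 1, b i = a i := hb1
    rcases lt_trichotomy j k with hc | hc | hc
    · have e1 := hag' j hc
      have e2 := hb1' (n + j) (by omega)
      omega
    · subst hc
      have e2 := hb1' (n + j) (by omega)
      omega
    · have e1 : ℓstar n k = b (n + k) := hj k hc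
      have e2 := hb1' (n + k) (by omega)
      omega

/-- the max-tail modification of a word -/
noncomputable def extWord (β : ℕ → ℝ) (a : ℕ → ℤ) (K : ℕ) : ℕ → ℤ :=
  fun i => if i < K then a i else ⌈β i⌉ - 1

lemma lstar_not_max (n J : ℕ) : ∃ i, J ≤ i ∧ ℓstar n i < ⌈shiftBase β n i⌉ - 1 := by
  by_contra hc
  push_neg at hc
  have heq : ∀ i, J ≤ i → ℓstar n i = ⌈shiftBase β n i⌉ - 1 := by
    intro i hi
    have h1 := (lstar_valid hβ hx hl n i).2
    have h2 := hc i hi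
    omega
  have hval : valB (shiftBase β (n + J)) (wordShift (ℓstar n) J) = xB (shiftBase β (n + J)) := by
    rw [xB_eq_valB]
    refine tsum_congr fun i => ?_
    have e1 : wordShift (ℓstar n) J i = ℓstar n (J + i) := rfl
    have e2 : ℓstar n (J + i) = ⌈shiftBase β n (J + i)⌉ - 1 := heq (J + i) (by omega)
    have e3 : shiftBase β n (J + i) = shiftBase β (n + J) i := by
      simp [shiftBase, Nat.add_assoc]
    rw [e1, e2, e3]
  have := lstar_tail_lt hβ hx hl n J
  rw [hval] at this
  exact lt_irrefl _ this

/-- converse direction of part 2 -/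
lemma closure_of_cond (ha : validWord β a)
    (hcond : ∀ n : ℕ, lexLe (ℓstar n) (wordShift a n)) :
    a ∈ closure (lazySet β) := by
  have hvalid : ∀ K, validWord β (extWord β a K) := by
    intro K i
    unfold extWord
    by_cases h : i < K
    · simp only [h, if_true]
      exact ha i
    · simp only [h, if_false]
      have := two_le_ceil hβ i
      omega
  have hmem : ∀ K, extWord β a K ∈ lazySet β := by
    intro K
    refine lazy_of_cond hβ hx hl (hvalid K) ?_
    intro n
    -- three cases
    have hle_max : ∀ i, ℓstar n i ≤ ⌈β (n + i)⌉ - 1 := by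
      intro i
      have := (lstar_valid hβ hx hl n i).2
      exact this
    by_cases hnK : n < K
    · rcases hcond n with hlt | heq
      · obtain ⟨k, hag, hklt⟩ := hlt
        by_cases hkK : n + k < K
        · refine ⟨k, fun i hi => ?_, ?_⟩
          · have : extWord β a K (n + i) = a (n + i) := by
              simp [extWord, show n + i < K from by omega]
            rw [show wordShift (extWord β a K) n i = extWord β a K (n + i) from rfl, this]
            exact hag i hi
          · have : extWord β a K (n + k) = a (n + k) := by
              simp [extWord, hkK]
            rw [show wordShift (extWord β a K) n k = extWord β a K (n + k) from rfl, this]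
            exact hklt
        · refine lexLt_of_le_of_ne (fun i => ?_) ?_
          · have hwi : wordShift (extWord β a K) n i = extWord β a K (n + i) := rfl
            rw [hwi]
            by_cases hiK : n + i < K
            · have : extWord β a K (n + i) = a (n + i) := by simp [extWord, hiK]
              rw [this]
              have := hag i (by omega)
              have e : wordShift a n i = a (n + i) := rfl
              omega
            · have : extWord β a K (n + i) = ⌈β (n + i)⌉ - 1 := by simp [extWord, hiK]
              rw [this]
              exact hle_max i
          · obtain ⟨i, hi1, hi2⟩ := lstar_not_max hβ hx hl n K
            intro hcontra
            have := congrFun hcontra i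
            have hwi : wordShift (extWord β a K) n i = extWord β a K (n + i) := rfl
            have hnotlt : ¬ (n + i < K) := by omega
            have he : extWord β a K (n + i) = ⌈β (n + i)⌉ - 1 := by simp [extWord, hnotlt]
            have hs : (⌈shiftBase β n i⌉ : ℤ) = ⌈β (n + i)⌉ := rfl
            rw [hwi, he] at this
            omega
      · refine lexLt_of_le_of_ne (fun i => ?_) ?_
        · have hwi : wordShift (extWord β a K) n i = extWord β a K (n + i) := rfl
          rw [hwi]
          by_cases hiK : n + i < K
          · have : extWord β a K (n + i) = a (n + i) := by simp [extWord, hiK]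
            rw [this]
            have := congrFun heq i
            have e : wordShift a n i = a (n + i) := rfl
            omega
          · have : extWord β a K (n + i) = ⌈β (n + i)⌉ - 1 := by simp [extWord, hiK]
            rw [this]
            exact hle_max i
        · obtain ⟨i, hi1, hi2⟩ := lstar_not_max hβ hx hl n K
          intro hcontra
          have := congrFun hcontra i
          have hwi : wordShift (extWord β a K) n i = extWord β a K (n + i) := rfl
          have hnotlt : ¬ (n + i < K) := by omega
          have he : extWord β a K (n + i) = ⌈β (n + i)⌉ - 1 := by simp [extWord, hnotlt]
          have hs : (⌈shiftBase β n i⌉ : ℤ) = ⌈β (n + i)⌉ := rfl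
          rw [hwi, he] at this
          omega
    · refine lexLt_of_le_of_ne (fun i => ?_) ?_
      · have hwi : wordShift (extWord β a K) n i = extWord β a K (n + i) := rfl
        rw [hwi]
        have hnotlt : ¬ (n + i < K) := by omega
        have : extWord β a K (n + i) = ⌈β (n + i)⌉ - 1 := by simp [extWord, hnotlt]
        rw [this]
        exact hle_max i
      · obtain ⟨i, hi1, hi2⟩ := lstar_not_max hβ hx hl n 0
        intro hcontra
        have := congrFun hcontra i
        have hwi : wordShift (extWord β a K) n i = extWord β a K (n + i) := rfl
        have hnotlt : ¬ (n + i < K) := by omega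
        have he : extWord β a K (n + i) = ⌈β (n + i)⌉ - 1 := by simp [extWord, hnotlt]
        have hs : (⌈shiftBase β n i⌉ : ℤ) = ⌈β (n + i)⌉ := rfl
        rw [hwi, he] at this
        omega
  have htend : Tendsto (fun K => extWord β a K) atTop (nhds a) := by
    rw [tendsto_pi_nhds]
    intro i
    have hev : ∀ᶠ K in atTop, extWord β a K i = a i :=
      eventually_atTop.2 ⟨i + 1, fun K hK => by simp [extWord, show i < K from by omega]⟩
    exact Tendsto.congr' (hev.mono fun K hK => hK.symm) tendsto_const_nhds
  exact mem_closure_of_tendsto htend (Filter.Eventually.of_forall hmem)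

end closurepart

end LazyParry

/-- lazy Parry criterion: membership in `D'_β` and `S'_β` is
characterized lexicographically by the quasi-lazy expansions of the shifted bases. -/
theorem lazy_parry (β : ℕ → ℝ) (hβ : IsCantorBase β) (hx : XBSummable β)
    (ℓstar : ℕ → ℕ → ℤ)
    (hl : ∀ n : ℕ, Tendsto (lazyDigit (shiftBase β n))
      (nhdsWithin (xB (shiftBase β n) - 1) (Set.Ioi (xB (shiftBase β n) - 1)))
      (nhds (ℓstar n)))
    (a : ℕ → ℤ) :
    (a ∈ lazySet β ↔ validWord β a ∧ ∀ n : ℕ, lexLt (ℓstar n) (fun m => a (n + m))) ∧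
    (a ∈ closure (lazySet β) ↔ validWord β a ∧ ∀ n : ℕ, lexLe (ℓstar n) (fun m => a (n + m))) := by
  constructor
  · constructor
    · intro h
      exact LazyParry.cond_of_lazy hβ hx hl h
    · rintro ⟨ha, hcond⟩
      exact LazyParry.lazy_of_cond hβ hx hl ha hcond
  · constructor
    · intro h
      exact LazyParry.cond_of_closure hβ hx hl h
    · rintro ⟨ha, hcond⟩
      exact LazyParry.closure_of_cond hβ hx hl ha hcond
end

section
/- Let β=(β_n)_{n∈ℕ} be a Cantor base with x_β<+∞. Then D'_β = ⋃_{n∈ℕ_{≥1}} X'_{β,n}·D'_{β^(n)} (concatenation of each word of X'_{β,n} with each element of D'_{β^(n)}). Moreover, every finite prefix of ℓ*_β(x_β−1) is a prefix of some element of D'_β. -/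
open Filter Topology

section Aux

variable {γ : ℕ → ℝ}

lemma aux_shift_zero (γ : ℕ → ℝ) : shiftBase γ 0 = γ := by
  funext m; simp [shiftBase]

lemma aux_shift_shift (γ : ℕ → ℝ) (k j : ℕ) :
    shiftBase (shiftBase γ k) j = shiftBase γ (k + j) := by
  funext m; simp [shiftBase, add_assoc]

lemma aux_prod_pos (hγ : ∀ n, 1 < γ n) (n : ℕ) : 0 < prodUpTo γ n :=
  Finset.prod_pos fun i _ => lt_trans one_pos (hγ i)

lemma aux_prod_zero (γ : ℕ → ℝ) : prodUpTo γ 0 = γ 0 := by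
  simp [prodUpTo]

lemma aux_prod_succ (γ : ℕ → ℝ) (n : ℕ) :
    prodUpTo γ (n + 1) = prodUpTo γ n * γ (n + 1) := by
  simp [prodUpTo, Finset.prod_range_succ]

lemma aux_prod_split (γ : ℕ → ℝ) (k m : ℕ) :
    prodUpTo γ (k + 1 + m) = prodUpTo γ k * prodUpTo (shiftBase γ (k + 1)) m := by
  unfold prodUpTo shiftBase
  rw [show k + 1 + m + 1 = (k + 1) + (m + 1) by ring, Finset.prod_range_add]

lemma aux_ceil_digit_nonneg (hγ : ∀ n, 1 < γ n) (n : ℕ) : (0 : ℤ) ≤ ⌈γ n⌉ - 1 := by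
  have : (1 : ℤ) < ⌈γ n⌉ := Int.lt_ceil.mpr (by exact_mod_cast hγ n)
  omega

lemma aux_ceil_valid (hγ : ∀ n, 1 < γ n) : validWord γ (fun n => ⌈γ n⌉ - 1) :=
  fun n => ⟨aux_ceil_digit_nonneg hγ n, le_rfl⟩

lemma aux_summable_valB (hγ : ∀ n, 1 < γ n) (hx : XBSummable γ) {a : ℕ → ℤ}
    (ha : validWord γ a) : Summable (fun n => (a n : ℝ) / prodUpTo γ n) := by
  refine Summable.of_nonneg_of_le (fun n => ?_) (fun n => ?_) hx
  · exact div_nonneg (by exact_mod_cast (ha n).1) (aux_prod_pos hγ n).le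
  · exact div_le_div_of_nonneg_right (by exact_mod_cast (ha n).2) (aux_prod_pos hγ n).le

lemma aux_xB_eq_valB (γ : ℕ → ℝ) : xB γ = valB γ (fun n => ⌈γ n⌉ - 1) := by
  unfold xB valB
  exact tsum_congr fun n => by push_cast; ring

lemma aux_xB_nonneg (hγ : ∀ n, 1 < γ n) : 0 ≤ xB γ := by
  unfold xB
  refine tsum_nonneg fun n => div_nonneg ?_ (aux_prod_pos hγ n).le
  have h := aux_ceil_digit_nonneg hγ n
  have h1 : (1:ℝ) ≤ (⌈γ n⌉ : ℝ) := by exact_mod_cast (by omega : (1:ℤ) ≤ ⌈γ n⌉)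
  linarith

end Aux
section Aux2

variable {γ : ℕ → ℝ}

lemma aux_valB_succ (hγ : ∀ n, 1 < γ n) (hx : XBSummable γ) {a : ℕ → ℤ}
    (ha : validWord γ a) :
    γ 0 * valB γ a = (a 0 : ℝ) + valB (shiftBase γ 1) (fun m => a (1 + m)) := by
  have hg0 : (0:ℝ) < γ 0 := lt_trans one_pos (hγ 0)
  have hs := aux_summable_valB hγ hx ha
  have key : valB γ a = (a 0 : ℝ) / γ 0 + valB (shiftBase γ 1) (fun m => a (1 + m)) / γ 0 := by
    unfold valB
    rw [hs.tsum_eq_zero_add, aux_prod_zero]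
    congr 1
    have hterm : ∀ m : ℕ, (a (m + 1) : ℝ) / prodUpTo γ (m + 1)
        = ((a (1 + m) : ℝ) / prodUpTo (shiftBase γ 1) m) / γ 0 := by
      intro m
      rw [show m + 1 = 0 + 1 + m by omega, aux_prod_split, aux_prod_zero,
        div_mul_eq_div_div_swap]
    rw [tsum_congr hterm, tsum_div_const]
  rw [key]
  field_simp

lemma aux_cantor_shift_one (hγ : IsCantorBase γ) : IsCantorBase (shiftBase γ 1) := by
  constructor
  · intro n; exact hγ.one_lt _
  · have hg0 : (0:ℝ) < γ 0 := lt_trans one_pos (hγ.one_lt 0)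
    have h := (hγ.prod_tendsto.comp (tendsto_add_atTop_nat 1)).atTop_div_const hg0
    apply h.congr
    intro N
    simp only [Function.comp_apply]
    rw [Finset.prod_range_succ']
    rw [mul_div_assoc, div_self hg0.ne', mul_one]
    exact Finset.prod_congr rfl fun i _ => by simp [shiftBase, add_comm]

lemma aux_summable_shift_one (hγ : ∀ n, 1 < γ n) (hx : XBSummable γ) :
    XBSummable (shiftBase γ 1) := by
  have hg0 : (0:ℝ) < γ 0 := lt_trans one_pos (hγ 0)
  unfold XBSummable at *
  have h := ((summable_nat_add_iff 1).2 hx).mul_left (γ 0)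
  apply h.congr
  intro m
  have hP : prodUpTo γ (m + 1) = γ 0 * prodUpTo (shiftBase γ 1) m := by
    rw [show m + 1 = 0 + 1 + m by omega, aux_prod_split, aux_prod_zero]
  have hPpos : (0:ℝ) < prodUpTo (shiftBase γ 1) m :=
    aux_prod_pos (fun n => hγ _) m
  rw [hP]
  have : shiftBase γ 1 m = γ (m + 1) := by simp [shiftBase, add_comm]
  rw [this]
  field_simp

lemma aux_shift_props (hγ : IsCantorBase γ) (hx : XBSummable γ) (k : ℕ) :
    IsCantorBase (shiftBase γ k) ∧ XBSummable (shiftBase γ k) := by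
  induction k with
  | zero => rw [aux_shift_zero]; exact ⟨hγ, hx⟩
  | succ k ih =>
    have h1 := aux_cantor_shift_one ih.1
    have h2 := aux_summable_shift_one ih.1.one_lt ih.2
    rw [aux_shift_shift] at h1 h2
    exact ⟨h1, h2⟩

lemma aux_valB_shift_succ (hγ : IsCantorBase γ) (hx : XBSummable γ) {a : ℕ → ℤ}
    (ha : validWord γ a) (k : ℕ) :
    γ k * valB (shiftBase γ k) (fun m => a (k + m))
      = (a k : ℝ) + valB (shiftBase γ (k + 1)) (fun m => a (k + 1 + m)) := by
  obtain ⟨hc, hs⟩ := aux_shift_props hγ hx k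
  have ha' : validWord (shiftBase γ k) (fun m => a (k + m)) := fun m => ha (k + m)
  have h := aux_valB_succ hc.one_lt hs ha'
  rw [aux_shift_shift] at h
  have e1 : shiftBase γ k 0 = γ k := by simp [shiftBase]
  have e2 : (fun m => a (k + (1 + m))) = fun m => a (k + 1 + m) := by
    funext m; congr 1; omega
  rw [e1] at h
  rw [e2] at h
  simpa using h

lemma aux_xB_shift_succ (hγ : IsCantorBase γ) (hx : XBSummable γ) (k : ℕ) :
    γ k * xB (shiftBase γ k) = (⌈γ k⌉ : ℝ) - 1 + xB (shiftBase γ (k + 1)) := by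
  have h := aux_valB_shift_succ hγ hx (aux_ceil_valid hγ.one_lt) k
  rw [aux_xB_eq_valB (shiftBase γ k), aux_xB_eq_valB (shiftBase γ (k + 1))]
  have e : ∀ j : ℕ, (fun n => ⌈shiftBase γ j n⌉ - 1) = (fun m => ⌈γ (j + m)⌉ - 1) := by
    intro j; funext m; simp [shiftBase]
  rw [e k, e (k + 1)]
  rw [h]
  push_cast
  ring

lemma aux_xB_succ0 (hγ : IsCantorBase γ) (hx : XBSummable γ) :
    γ 0 * xB γ = (⌈γ 0⌉ : ℝ) - 1 + xB (shiftBase γ 1) := by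
  have h := aux_xB_shift_succ hγ hx 0
  rwa [aux_shift_zero] at h

lemma aux_ceil_step {c X X' s : ℝ} (hc : 1 < c) (hrec : c * X = (⌈c⌉ : ℝ) - 1 + X')
    (hs : s ∈ Set.Ioc (X - 1) X) :
    ((0:ℤ) ≤ ⌈c * s - X'⌉ ∧ ⌈c * s - X'⌉ ≤ ⌈c⌉ - 1) ∧
      (c * s - (⌈c * s - X'⌉ : ℝ)) ∈ Set.Ioc (X' - 1) X' := by
  obtain ⟨h1, h2⟩ := hs
  have hc0 : (0:ℝ) < c := lt_trans one_pos hc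
  have hcc : c ≤ (⌈c⌉ : ℝ) := Int.le_ceil c
  have hm1 : c * s ≤ c * X := mul_le_mul_of_nonneg_left h2 hc0.le
  have hm2 : c * (X - 1) < c * s := mul_lt_mul_of_pos_left h1 hc0
  have hyle : c * s - X' ≤ (⌈c⌉ : ℝ) - 1 := by nlinarith
  have hygt : (-1 : ℝ) < c * s - X' := by nlinarith
  have hd1 : (0:ℤ) ≤ ⌈c * s - X'⌉ := by
    have : (-1 : ℤ) < ⌈c * s - X'⌉ := Int.lt_ceil.mpr (by push_cast; linarith)
    omega
  have hd2 : ⌈c * s - X'⌉ ≤ ⌈c⌉ - 1 := Int.ceil_le.mpr (by push_cast; linarith)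
  refine ⟨⟨hd1, hd2⟩, ?_, ?_⟩
  · have := Int.ceil_lt_add_one (c * s - X'); linarith
  · have := Int.le_ceil (c * s - X'); linarith

end Aux2
section Aux3

variable {γ : ℕ → ℝ}

lemma aux_lazyS_zero (γ : ℕ → ℝ) (x : ℝ) :
    lazyS γ x 0 = γ 0 * x - (⌈γ 0 * x - xB (shiftBase γ 1)⌉ : ℝ) := rfl

lemma aux_lazyS_succ (γ : ℕ → ℝ) (x : ℝ) (n : ℕ) :
    lazyS γ x (n + 1) = γ (n + 1) * lazyS γ x n -
      (⌈γ (n + 1) * lazyS γ x n - xB (shiftBase γ (n + 2))⌉ : ℝ) := rfl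

lemma aux_lazyDigit_zero (γ : ℕ → ℝ) (x : ℝ) :
    lazyDigit γ x 0 = ⌈γ 0 * x - xB (shiftBase γ 1)⌉ := rfl

lemma aux_lazyDigit_succ (γ : ℕ → ℝ) (x : ℝ) (n : ℕ) :
    lazyDigit γ x (n + 1) = ⌈γ (n + 1) * lazyS γ x n - xB (shiftBase γ (n + 2))⌉ := rfl

lemma aux_lazy_inv (hγ : IsCantorBase γ) (hx : XBSummable γ) {x : ℝ}
    (hxm : x ∈ Set.Ioc (xB γ - 1) (xB γ)) (n : ℕ) :
    lazyS γ x n ∈ Set.Ioc (xB (shiftBase γ (n + 1)) - 1) (xB (shiftBase γ (n + 1))) ∧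
      0 ≤ lazyDigit γ x n ∧ lazyDigit γ x n ≤ ⌈γ n⌉ - 1 := by
  induction n with
  | zero =>
    have hrec : γ 0 * xB γ = (⌈γ 0⌉ : ℝ) - 1 + xB (shiftBase γ 1) := aux_xB_succ0 hγ hx
    have h := aux_ceil_step (hγ.one_lt 0) hrec hxm
    rw [aux_lazyS_zero, aux_lazyDigit_zero]
    exact ⟨h.2, h.1⟩
  | succ n ih =>
    have hrec := aux_xB_shift_succ hγ hx (n + 1)
    have h := aux_ceil_step (hγ.one_lt (n + 1)) hrec ih.1
    rw [aux_lazyS_succ, aux_lazyDigit_succ]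
    exact ⟨h.2, h.1⟩

lemma aux_lazy_shift (γ : ℕ → ℝ) (x : ℝ) (k : ℕ) : ∀ m : ℕ,
    lazyS γ x (k + 1 + m) = lazyS (shiftBase γ (k + 1)) (lazyS γ x k) m ∧
    lazyDigit γ x (k + 1 + m) = lazyDigit (shiftBase γ (k + 1)) (lazyS γ x k) m := by
  intro m
  induction m with
  | zero =>
    have e0 : shiftBase γ (k + 1) 0 = γ (k + 1) := by simp [shiftBase]
    constructor
    · rw [show k + 1 + 0 = k + 1 from rfl, aux_lazyS_succ,
        aux_lazyS_zero (shiftBase γ (k + 1)), aux_shift_shift, e0]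
    · rw [show k + 1 + 0 = k + 1 from rfl, aux_lazyDigit_succ,
        aux_lazyDigit_zero (shiftBase γ (k + 1)), aux_shift_shift, e0]
  | succ m ih =>
    have e1 : shiftBase γ (k + 1) (m + 1) = γ (k + 1 + m + 1) := rfl
    have e2 : shiftBase (shiftBase γ (k + 1)) (m + 2) = shiftBase γ (k + 1 + m + 2) := by
      rw [aux_shift_shift]; congr 1; try omega
    constructor
    · rw [show k + 1 + (m + 1) = (k + 1 + m) + 1 by omega, aux_lazyS_succ,
        aux_lazyS_succ (shiftBase γ (k + 1)), e1, e2, ih.1]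
    · rw [show k + 1 + (m + 1) = (k + 1 + m) + 1 by omega, aux_lazyDigit_succ,
        aux_lazyDigit_succ (shiftBase γ (k + 1)), e1, e2, ih.1]

lemma aux_lazy_partial (hγ : ∀ n, 1 < γ n) (x : ℝ) (n : ℕ) :
    x = (∑ k ∈ Finset.range (n + 1), (lazyDigit γ x k : ℝ) / prodUpTo γ k)
        + lazyS γ x n / prodUpTo γ n := by
  induction n with
  | zero =>
    rw [Finset.sum_range_one, aux_prod_zero, aux_lazyS_zero, aux_lazyDigit_zero]
    have : γ 0 ≠ 0 := (lt_trans one_pos (hγ 0)).ne'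
    field_simp
    ring
  | succ n ih =>
    rw [Finset.sum_range_succ, aux_prod_succ, aux_lazyS_succ, aux_lazyDigit_succ, add_assoc]
    have h1 : prodUpTo γ n ≠ 0 := (aux_prod_pos hγ n).ne'
    have h2 : γ (n + 1) ≠ 0 := (lt_trans one_pos (hγ (n + 1))).ne'
    conv_lhs => rw [ih]
    congr 1
    field_simp
    ring

lemma aux_invP_tendsto (hγ : IsCantorBase γ) :
    Filter.Tendsto (fun n => prodUpTo γ n) Filter.atTop Filter.atTop := by
  have h := hγ.prod_tendsto.comp (tendsto_add_atTop_nat 1)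
  exact h.congr fun n => rfl

lemma aux_tail_tendsto (hγ : IsCantorBase γ) (hx : XBSummable γ) :
    Filter.Tendsto (fun n => xB (shiftBase γ (n + 1)) / prodUpTo γ n)
      Filter.atTop (nhds 0) := by
  set g : ℕ → ℝ := fun j => ((⌈γ j⌉ : ℝ) - 1) / prodUpTo γ j with hg
  have key : ∀ n : ℕ, xB (shiftBase γ (n + 1)) / prodUpTo γ n = ∑' m, g (n + 1 + m) := by
    intro n
    have hP := aux_prod_pos hγ.one_lt n
    have hterm : ∀ m : ℕ, ((⌈shiftBase γ (n + 1) m⌉ : ℝ) - 1) / prodUpTo (shiftBase γ (n + 1)) m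
        = prodUpTo γ n * g (n + 1 + m) := by
      intro m
      have hP2 : (0:ℝ) < prodUpTo (shiftBase γ (n + 1)) m :=
        aux_prod_pos (fun i => hγ.one_lt (n + 1 + i)) m
      simp only [hg]
      rw [aux_prod_split γ n m, show shiftBase γ (n + 1) m = γ (n + 1 + m) from rfl]
      field_simp
    rw [show xB (shiftBase γ (n + 1)) = ∑' m, ((⌈shiftBase γ (n + 1) m⌉ : ℝ) - 1) /
        prodUpTo (shiftBase γ (n + 1)) m from rfl, tsum_congr hterm, tsum_mul_left]
    field_simp
  have h0 : Filter.Tendsto (fun n : ℕ => ∑' m, g (n + 1 + m)) Filter.atTop (nhds 0) := by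
    have h := (tendsto_sum_nat_add g).comp (tendsto_add_atTop_nat 1)
    apply h.congr
    intro n
    show (∑' k, g (k + (n + 1))) = ∑' m, g (n + 1 + m)
    exact tsum_congr fun k => by congr 1; omega
  exact h0.congr fun n => (key n).symm

end Aux3
section Aux4

variable {γ : ℕ → ℝ}

lemma aux_lazy_valid (hγ : IsCantorBase γ) (hx : XBSummable γ) {x : ℝ}
    (hxm : x ∈ Set.Ioc (xB γ - 1) (xB γ)) : validWord γ (lazyDigit γ x) :=
  fun n => (aux_lazy_inv hγ hx hxm n).2

lemma aux_lazy_hasSum (hγ : IsCantorBase γ) (hx : XBSummable γ) {x : ℝ}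
    (hxm : x ∈ Set.Ioc (xB γ - 1) (xB γ)) :
    HasSum (fun k => (lazyDigit γ x k : ℝ) / prodUpTo γ k) x := by
  have hsum := aux_summable_valB hγ.one_lt hx (aux_lazy_valid hγ hx hxm)
  have hts := hsum.hasSum
  -- partial sums tend to the tsum
  have h1 : Filter.Tendsto
      (fun n => ∑ k ∈ Finset.range (n + 1), (lazyDigit γ x k : ℝ) / prodUpTo γ k)
      Filter.atTop (nhds (∑' k, (lazyDigit γ x k : ℝ) / prodUpTo γ k)) :=
    hts.tendsto_sum_nat.comp (tendsto_add_atTop_nat 1)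
  -- remainder tends to 0
  have hrem : Filter.Tendsto (fun n => lazyS γ x n / prodUpTo γ n) Filter.atTop (nhds 0) := by
    have hup := aux_tail_tendsto hγ hx
    have hlow : Filter.Tendsto (fun n : ℕ => -(1 / prodUpTo γ n)) Filter.atTop (nhds 0) := by
      have h := (aux_invP_tendsto hγ).inv_tendsto_atTop.neg
      rw [neg_zero] at h
      exact h.congr fun n => by simp [one_div]
    refine tendsto_of_tendsto_of_tendsto_of_le_of_le hlow hup ?_ ?_
    · intro n
      have h := (aux_lazy_inv hγ hx hxm n).1
      have hX : 0 ≤ xB (shiftBase γ (n + 1)) :=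
        aux_xB_nonneg (fun i => hγ.one_lt (n + 1 + i))
      have hP := aux_prod_pos hγ.one_lt n
      have hge : (-1 : ℝ) ≤ lazyS γ x n := by
        have := h.1; linarith
      have hdiv := div_le_div_of_nonneg_right hge hP.le
      rw [neg_div] at hdiv
      exact hdiv
    · intro n
      have h := (aux_lazy_inv hγ hx hxm n).1
      have hP := aux_prod_pos hγ.one_lt n
      exact div_le_div_of_nonneg_right h.2 hP.le
  have h2 : Filter.Tendsto
      (fun n => ∑ k ∈ Finset.range (n + 1), (lazyDigit γ x k : ℝ) / prodUpTo γ k)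
      Filter.atTop (nhds x) := by
    have := (tendsto_const_nhds : Filter.Tendsto (fun _ : ℕ => x) Filter.atTop (nhds x)).sub hrem
    rw [sub_zero] at this
    apply this.congr
    intro n
    have := aux_lazy_partial hγ.one_lt x n
    linarith
  have := tendsto_nhds_unique h1 h2
  rwa [this] at hts

lemma aux_lazy_mono (hγ : ∀ n, 1 < γ n) {x y : ℝ} (hyx : y ≤ x) : ∀ n : ℕ,
    ((∀ i ≤ n, lazyDigit γ y i = lazyDigit γ x i) → lazyS γ y n ≤ lazyS γ x n) ∧
    ((∀ i < n, lazyDigit γ y i = lazyDigit γ x i) → lazyDigit γ y n ≤ lazyDigit γ x n) := by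
  intro n
  induction n with
  | zero =>
    have hg0 : (0:ℝ) < γ 0 := lt_trans one_pos (hγ 0)
    have hmul : γ 0 * y ≤ γ 0 * x := mul_le_mul_of_nonneg_left hyx hg0.le
    constructor
    · intro hd
      have hd0 := hd 0 le_rfl
      rw [aux_lazyDigit_zero, aux_lazyDigit_zero] at hd0
      rw [aux_lazyS_zero, aux_lazyS_zero, hd0]
      linarith
    · intro _
      rw [aux_lazyDigit_zero, aux_lazyDigit_zero]
      exact Int.ceil_le_ceil (by linarith)
  | succ n ih =>
    have hg : (0:ℝ) < γ (n + 1) := lt_trans one_pos (hγ (n + 1))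
    constructor
    · intro hd
      have hs := ih.1 fun i hi => hd i (le_trans hi (Nat.le_succ n))
      have hmul : γ (n + 1) * lazyS γ y n ≤ γ (n + 1) * lazyS γ x n :=
        mul_le_mul_of_nonneg_left hs hg.le
      have hdn := hd (n + 1) le_rfl
      rw [aux_lazyDigit_succ, aux_lazyDigit_succ] at hdn
      rw [aux_lazyS_succ, aux_lazyS_succ, hdn]
      linarith
    · intro hd
      have hs := ih.1 fun i hi => hd i (Nat.lt_succ_of_le hi)
      have hmul : γ (n + 1) * lazyS γ y n ≤ γ (n + 1) * lazyS γ x n :=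
        mul_le_mul_of_nonneg_left hs hg.le
      rw [aux_lazyDigit_succ, aux_lazyDigit_succ]
      exact Int.ceil_le_ceil (by linarith)

end Aux4
section Aux5

variable {β : ℕ → ℝ} {ℓstar : ℕ → ℤ}

lemma aux_hev (hl : Tendsto (lazyDigit β) (nhdsWithin (xB β - 1) (Set.Ioi (xB β - 1)))
    (nhds ℓstar)) (i : ℕ) :
    ∀ᶠ y in nhdsWithin (xB β - 1) (Set.Ioi (xB β - 1)), lazyDigit β y i = ℓstar i := by
  have h : Tendsto (fun y => lazyDigit β y i)
      (nhdsWithin (xB β - 1) (Set.Ioi (xB β - 1))) (nhds (ℓstar i)) :=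
    ((continuous_apply i).continuousAt).tendsto.comp hl
  have hmem : {z : ℤ | z = ℓstar i} ∈ nhds (ℓstar i) := by
    exact (isOpen_discrete _).mem_nhds rfl
  exact h hmem

lemma aux_hevk (hl : Tendsto (lazyDigit β) (nhdsWithin (xB β - 1) (Set.Ioi (xB β - 1)))
    (nhds ℓstar)) (k : ℕ) :
    ∀ᶠ y in nhdsWithin (xB β - 1) (Set.Ioi (xB β - 1)),
      ∀ i < k, lazyDigit β y i = ℓstar i := by
  induction k with
  | zero => filter_upwards with y; exact fun i hi => absurd hi (Nat.not_lt_zero i)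
  | succ k ih =>
    filter_upwards [ih, aux_hev hl k] with y h1 h2 i hi
    rcases Nat.lt_succ_iff_lt_or_eq.mp hi with h | h
    · exact h1 i h
    · rw [h]; exact h2

noncomputable def auxYseq (β : ℕ → ℝ) : ℕ → ℝ := fun j => xB β - 1 + 1 / (j + 1)

lemma aux_yseq_mem (hβ : IsCantorBase β) (j : ℕ) :
    auxYseq β j ∈ Set.Ioc (xB β - 1) (xB β) := by
  have h1 : (0:ℝ) < 1 / ((j:ℝ) + 1) := by positivity
  have h2 : 1 / ((j:ℝ) + 1) ≤ 1 := by
    rw [div_le_one (by positivity)]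
    have : (0:ℝ) ≤ (j:ℝ) := Nat.cast_nonneg j
    linarith
  constructor
  · simp only [auxYseq]; linarith
  · simp only [auxYseq]; linarith

lemma aux_yseq_tendsto (β : ℕ → ℝ) :
    Tendsto (auxYseq β) atTop (nhdsWithin (xB β - 1) (Set.Ioi (xB β - 1))) := by
  apply tendsto_nhdsWithin_of_tendsto_nhds_of_eventually_within
  · have h := tendsto_one_div_add_atTop_nhds_zero_nat (𝕜 := ℝ)
    have h2 := (tendsto_const_nhds :
      Tendsto (fun _ : ℕ => xB β - 1) atTop (nhds (xB β - 1))).add h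
    rw [add_zero] at h2
    exact h2
  · filter_upwards with j
    have : (0:ℝ) < 1 / ((j:ℝ) + 1) := by positivity
    simp only [auxYseq, Set.mem_Ioi]
    linarith

lemma aux_lstar_valid (hβ : IsCantorBase β) (hx : XBSummable β)
    (hl : Tendsto (lazyDigit β) (nhdsWithin (xB β - 1) (Set.Ioi (xB β - 1)))
      (nhds ℓstar)) : validWord β ℓstar := by
  intro i
  obtain ⟨j, hj⟩ := ((aux_yseq_tendsto β).eventually (aux_hev hl i)).exists
  rw [← hj]
  exact (aux_lazy_inv hβ hx (aux_yseq_mem hβ j) i).2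

lemma aux_S0 (hβ : IsCantorBase β) (hx : XBSummable β)
    (hl : Tendsto (lazyDigit β) (nhdsWithin (xB β - 1) (Set.Ioi (xB β - 1)))
      (nhds ℓstar)) : valB β ℓstar = xB β - 1 := by
  have hval : ∀ j, valB β (lazyDigit β (auxYseq β j)) = auxYseq β j := fun j =>
    (aux_lazy_hasSum hβ hx (aux_yseq_mem hβ j)).tsum_eq
  have htd : Tendsto (fun j => valB β (lazyDigit β (auxYseq β j))) atTop
      (nhds (valB β ℓstar)) := by
    unfold valB
    apply tendsto_tsum_of_dominated_convergence
      (bound := fun m => ((⌈β m⌉ : ℝ) - 1) / prodUpTo β m) hx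
    · intro m
      have hev := (aux_yseq_tendsto β).eventually (aux_hev hl m)
      apply Tendsto.congr' _ tendsto_const_nhds
      filter_upwards [hev] with j hj
      rw [hj]
    · filter_upwards with j m
      have hd := (aux_lazy_inv hβ hx (aux_yseq_mem hβ j) m).2
      have hP := aux_prod_pos hβ.one_lt m
      rw [Real.norm_eq_abs, abs_of_nonneg (div_nonneg (by exact_mod_cast hd.1) hP.le)]
      refine div_le_div_of_nonneg_right ?_ hP.le
      have := hd.2
      push_cast
      exact_mod_cast this
  have htd2 : Tendsto (fun j => valB β (lazyDigit β (auxYseq β j))) atTop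
      (nhds (xB β - 1)) := by
    have h := tendsto_one_div_add_atTop_nhds_zero_nat (𝕜 := ℝ)
    have h2 := (tendsto_const_nhds :
      Tendsto (fun _ : ℕ => xB β - 1) atTop (nhds (xB β - 1))).add h
    rw [add_zero] at h2
    exact h2.congr fun j => (hval j).symm
  exact tendsto_nhds_unique htd htd2

lemma aux_S_mem (hβ : IsCantorBase β) (hx : XBSummable β)
    (hl : Tendsto (lazyDigit β) (nhdsWithin (xB β - 1) (Set.Ioi (xB β - 1)))
      (nhds ℓstar)) (k : ℕ) :
    valB (shiftBase β (k + 1)) (fun m => ℓstar (k + 1 + m)) ∈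
      Set.Icc (xB (shiftBase β (k + 1)) - 1) (xB (shiftBase β (k + 1))) := by
  obtain ⟨hδc, hδs⟩ := aux_shift_props hβ hx (k + 1)
  set δ := shiftBase β (k + 1) with hδ
  have hzmem : ∀ j, lazyS β (auxYseq β j) k ∈ Set.Ioc (xB δ - 1) (xB δ) := fun j =>
    (aux_lazy_inv hβ hx (aux_yseq_mem hβ j) k).1
  have hdig : ∀ j m, lazyDigit β (auxYseq β j) (k + 1 + m)
      = lazyDigit δ (lazyS β (auxYseq β j) k) m := fun j m =>
    (aux_lazy_shift β (auxYseq β j) k m).2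
  have hval : ∀ j, valB δ (fun m => lazyDigit β (auxYseq β j) (k + 1 + m))
      = lazyS β (auxYseq β j) k := by
    intro j
    have h := (aux_lazy_hasSum hδc hδs (hzmem j)).tsum_eq
    rw [← h]
    unfold valB
    exact tsum_congr fun m => by simp only [hdig j m]
  have htd : Tendsto (fun j => valB δ (fun m => lazyDigit β (auxYseq β j) (k + 1 + m)))
      atTop (nhds (valB δ (fun m => ℓstar (k + 1 + m)))) := by
    unfold valB
    apply tendsto_tsum_of_dominated_convergence
      (bound := fun m => ((⌈δ m⌉ : ℝ) - 1) / prodUpTo δ m) hδs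
    · intro m
      have hev := (aux_yseq_tendsto β).eventually (aux_hev hl (k + 1 + m))
      apply Tendsto.congr' _ tendsto_const_nhds
      filter_upwards [hev] with j hj
      rw [hj]
    · filter_upwards with j m
      have hd := (aux_lazy_inv hδc hδs (hzmem j) m).2
      rw [← hdig j m] at hd
      have hP := aux_prod_pos hδc.one_lt m
      rw [Real.norm_eq_abs, abs_of_nonneg (div_nonneg (by exact_mod_cast hd.1) hP.le)]
      refine div_le_div_of_nonneg_right ?_ hP.le
      have := hd.2
      push_cast
      exact_mod_cast this
  constructor
  · refine ge_of_tendsto htd ?_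
    filter_upwards with j
    rw [hval j]
    exact (hzmem j).1.le
  · refine le_of_tendsto htd ?_
    filter_upwards with j
    rw [hval j]
    exact (hzmem j).2

end Aux5
section Aux6

variable {β : ℕ → ℝ} {ℓstar : ℕ → ℤ}

lemma aux_hceil : ∀ (A : ℤ) (w X' : ℝ), X' - 1 < w → w ≤ X' → ⌈(A : ℝ) + w - X'⌉ = A := by
  intro A w X' hw1 hw2
  have h : (A : ℝ) + w - X' = (w - X') + A := by ring
  rw [h, Int.ceil_add_intCast]
  have h0 : ⌈w - X'⌉ = 0 := Int.ceil_eq_zero_iff.mpr ⟨by linarith, by linarith⟩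
  omega

lemma aux_reverse (hβ : IsCantorBase β) (hx : XBSummable β)
    (hl : Tendsto (lazyDigit β) (nhdsWithin (xB β - 1) (Set.Ioi (xB β - 1)))
      (nhds ℓstar)) {a : ℕ → ℤ} {n : ℕ}
    (h1 : ∀ i < n, a i = ℓstar i) (h2 : ℓstar n < a n) (h3 : a n ≤ ⌈β n⌉ - 1)
    {z : ℝ} (hz : z ∈ Set.Ioc (xB (shiftBase β (n + 1)) - 1) (xB (shiftBase β (n + 1))))
    (hza : (fun m => a (n + 1 + m)) = lazyDigit (shiftBase β (n + 1)) z) :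
    a ∈ lazySet β := by
  have hlv := aux_lstar_valid hβ hx hl
  have hSrec : ∀ k, β k * valB (shiftBase β k) (fun m => ℓstar (k + m))
      = (ℓstar k : ℝ) + valB (shiftBase β (k + 1)) (fun m => ℓstar (k + 1 + m)) :=
    fun k => aux_valB_shift_succ hβ hx hlv k
  have hS0 : valB (shiftBase β 0) (fun m => ℓstar (0 + m)) = xB β - 1 := by
    rw [show (fun m => ℓstar (0 + m)) = ℓstar from funext fun m => by rw [Nat.zero_add],
      aux_shift_zero]
    exact aux_S0 hβ hx hl
  have hSmem : ∀ k, valB (shiftBase β (k + 1)) (fun m => ℓstar (k + 1 + m)) ∈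
      Set.Icc (xB (shiftBase β (k + 1)) - 1) (xB (shiftBase β (k + 1))) :=
    fun k => aux_S_mem hβ hx hl k
  have hXrec : ∀ k, β k * xB (shiftBase β k) = (⌈β k⌉ : ℝ) - 1 + xB (shiftBase β (k + 1)) :=
    fun k => aux_xB_shift_succ hβ hx k
  have hbpos : ∀ k, (0:ℝ) < β k := fun k => lt_trans one_pos (hβ.one_lt k)
  have hb : ∀ i, i ≤ n → (a i : ℝ) ≤ (⌈β i⌉ : ℝ) - 1 := by
    intro i hi
    rcases lt_or_eq_of_le hi with hlt | heq
    · have hh : a i ≤ ⌈β i⌉ - 1 := by rw [h1 i hlt]; exact (hlv i).2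
      exact_mod_cast hh
    · subst heq; exact_mod_cast h3
  -- the backwards value sequence
  let f : ℕ → ℝ := fun j =>
    Nat.rec (motive := fun _ => ℝ) z (fun i fi => ((a (n - i) : ℝ) + fi) / β (n - i)) j
  have hf0 : f 0 = z := rfl
  have hfs : ∀ j, f (j + 1) = ((a (n - j) : ℝ) + f j) / β (n - j) := fun j => rfl
  -- upper bound
  have claimU : ∀ j, j ≤ n + 1 → f j ≤ xB (shiftBase β (n + 1 - j)) := by
    intro j
    induction j with
    | zero => intro _; simpa [hf0] using hz.2
    | succ j ih =>
      intro hj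
      have hle := ih (by omega)
      have e : n + 1 - j = (n - j) + 1 := by omega
      rw [e] at hle
      have hrec' : xB (shiftBase β (n - j)) * β (n - j)
          = (⌈β (n - j)⌉ : ℝ) - 1 + xB (shiftBase β ((n - j) + 1)) := by
        rw [mul_comm]; exact hXrec (n - j)
      have hbk := hb (n - j) (by omega)
      rw [hfs j, show n + 1 - (j + 1) = n - j by omega, div_le_iff₀ (hbpos (n - j))]
      linarith
  -- strict lower bound by the quasi-lazy value
  have claimL : ∀ j, 1 ≤ j → j ≤ n + 1 →
      valB (shiftBase β (n + 1 - j)) (fun m => ℓstar (n + 1 - j + m)) < f j := by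
    intro j
    induction j with
    | zero => intro h; exact absurd h (by omega)
    | succ j ih =>
      intro _ hj
      rcases Nat.eq_zero_or_pos j with rfl | hjpos
      · have hrec' : valB (shiftBase β n) (fun m => ℓstar (n + m)) * β n
            = (ℓstar n : ℝ) + valB (shiftBase β (n + 1)) (fun m => ℓstar (n + 1 + m)) := by
          rw [mul_comm]; exact hSrec n
        have hSm := (hSmem n).2
        have han : (ℓstar n : ℝ) + 1 ≤ (a n : ℝ) := by
          exact_mod_cast Int.lt_iff_add_one_le.mp h2
        have hz1 := hz.1
        rw [hfs 0, hf0, show n - 0 = n from rfl, show n + 1 - 1 = n by omega,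
          lt_div_iff₀ (hbpos n)]
        linarith
      · have ihh := ih (by omega) (by omega)
        have hk : n - j < n := by omega
        have hak : a (n - j) = ℓstar (n - j) := h1 _ hk
        have e : n + 1 - j = (n - j) + 1 := by omega
        rw [e] at ihh
        have hrec' : valB (shiftBase β (n - j)) (fun m => ℓstar (n - j + m)) * β (n - j)
            = (ℓstar (n - j) : ℝ)
              + valB (shiftBase β ((n - j) + 1)) (fun m => ℓstar ((n - j) + 1 + m)) := by
          rw [mul_comm]; exact hSrec (n - j)
        rw [hfs j, show n + 1 - (j + 1) = n - j by omega, lt_div_iff₀ (hbpos (n - j)), hak]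
        linarith
  -- lower bound needed for digit computation
  have claimL' : ∀ j, j ≤ n → xB (shiftBase β (n + 1 - j)) - 1 < f j := by
    intro j hj
    rcases Nat.eq_zero_or_pos j with rfl | hjpos
    · simpa [hf0] using hz.1
    · have h := claimL j (by omega) (by omega)
      have e : n + 1 - j = (n - j) + 1 := by omega
      have hm := (hSmem (n - j)).1
      rw [e] at h ⊢
      linarith
  -- membership of x
  have hxIoc : f (n + 1) ∈ Set.Ioc (xB β - 1) (xB β) := by
    constructor
    · have h := claimL (n + 1) (by omega) le_rfl
      rw [show n + 1 - (n + 1) = 0 by omega] at h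
      rw [hS0] at h
      exact h
    · have h := claimU (n + 1) le_rfl
      rw [show n + 1 - (n + 1) = 0 by omega, aux_shift_zero] at h
      exact h
  -- the digits of x are a
  have claimD : ∀ j, j ≤ n →
      lazyDigit β (f (n + 1)) j = a j ∧ lazyS β (f (n + 1)) j = f (n - j) := by
    intro j
    induction j with
    | zero =>
      intro _
      have e0 : n - n = 0 := Nat.sub_self n
      have hfn1 : β 0 * f (n + 1) = (a 0 : ℝ) + f n := by
        rw [hfs n, e0]
        field_simp
        exact mul_div_cancel_left₀ _ (hbpos 0).ne'
      have hu := claimU n (by omega)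
      have hl' := claimL' n le_rfl
      rw [show n + 1 - n = 1 by omega] at hu hl'
      constructor
      · show (⌈β 0 * f (n + 1) - xB (shiftBase β 1)⌉ : ℤ) = a 0
        rw [hfn1]
        exact aux_hceil (a 0) (f n) _ hl' hu
      · show β 0 * f (n + 1) - (⌈β 0 * f (n + 1) - xB (shiftBase β 1)⌉ : ℝ) = f (n - 0)
        rw [hfn1, aux_hceil (a 0) (f n) _ hl' hu, show n - 0 = n from rfl]
        ring
    | succ j ih =>
      intro hj
      have ihh := ih (by omega)
      have e1 : n - j = (n - (j + 1)) + 1 := by omega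
      have e2 : n - (n - (j + 1)) = j + 1 := by omega
      have hstep : β (j + 1) * f (n - j) = (a (j + 1) : ℝ) + f (n - (j + 1)) := by
        rw [e1, hfs (n - (j + 1)), e2]
        field_simp
        exact mul_div_cancel_left₀ _ (hbpos (j + 1)).ne'
      have hu := claimU (n - (j + 1)) (by omega)
      have hl' := claimL' (n - (j + 1)) (by omega)
      have e3 : n + 1 - (n - (j + 1)) = j + 2 := by omega
      rw [e3] at hu hl'
      constructor
      · show (⌈β (j + 1) * lazyS β (f (n + 1)) j - xB (shiftBase β (j + 2))⌉ : ℤ) = a (j + 1)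
        rw [ihh.2, hstep]
        exact aux_hceil _ _ _ hl' hu
      · show β (j + 1) * lazyS β (f (n + 1)) j
            - (⌈β (j + 1) * lazyS β (f (n + 1)) j - xB (shiftBase β (j + 2))⌉ : ℝ)
            = f (n - (j + 1))
        rw [ihh.2, hstep, aux_hceil _ _ _ hl' hu]
        ring
  -- tail digits
  have hzs : lazyS β (f (n + 1)) n = z := by
    have h := (claimD n le_rfl).2
    rw [Nat.sub_self] at h
    rw [h, hf0]
  have htail : ∀ m, lazyDigit β (f (n + 1)) (n + 1 + m) = a (n + 1 + m) := by
    intro m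
    have h := (aux_lazy_shift β (f (n + 1)) n m).2
    rw [h, hzs, ← hza]
  refine ⟨f (n + 1), hxIoc, ?_⟩
  funext i
  rcases le_or_gt i n with hi | hi
  · exact ((claimD i hi).1).symm
  · have e : i = n + 1 + (i - (n + 1)) := by omega
    rw [e, htail (i - (n + 1))]

lemma aux_forward (hβ : IsCantorBase β) (hx : XBSummable β)
    (hl : Tendsto (lazyDigit β) (nhdsWithin (xB β - 1) (Set.Ioi (xB β - 1)))
      (nhds ℓstar)) {x : ℝ} (hxm : x ∈ Set.Ioc (xB β - 1) (xB β)) :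
    ∃ n : ℕ, (∀ i < n, lazyDigit β x i = ℓstar i) ∧ ℓstar n < lazyDigit β x n ∧
      lazyDigit β x n ≤ ⌈β n⌉ - 1 ∧
      (fun m => lazyDigit β x (n + 1 + m)) ∈ lazySet (shiftBase β (n + 1)) := by
  classical
  have hne : ∃ i, lazyDigit β x i ≠ ℓstar i := by
    by_contra h
    push_neg at h
    have heq : lazyDigit β x = ℓstar := funext h
    have hv : valB β (lazyDigit β x) = x := (aux_lazy_hasSum hβ hx hxm).tsum_eq
    rw [heq, aux_S0 hβ hx hl] at hv
    have := hxm.1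
    linarith
  let n := Nat.find hne
  have hn : lazyDigit β x n ≠ ℓstar n := Nat.find_spec hne
  have hpre : ∀ i < n, lazyDigit β x i = ℓstar i := by
    intro i hi
    have := Nat.find_min hne hi
    push_neg at this
    exact this
  have hlt : ℓstar n < lazyDigit β x n := by
    have hIoo : Set.Ioo (xB β - 1) x ∈ nhdsWithin (xB β - 1) (Set.Ioi (xB β - 1)) :=
      Ioo_mem_nhdsGT_of_mem ⟨le_rfl, hxm.1⟩
    obtain ⟨y, hy1, hy2⟩ :=
      ((aux_hevk hl (n + 1)).and (eventually_of_mem hIoo fun y hy => hy)).exists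
    have hmono := (aux_lazy_mono hβ.one_lt hy2.2.le n).2
      (fun i hi => by rw [hy1 i (by omega), hpre i hi])
    rw [hy1 n (by omega)] at hmono
    omega
  exact ⟨n, hpre, hlt, (aux_lazy_inv hβ hx hxm n).2.2,
    ⟨lazyS β x n, (aux_lazy_inv hβ hx hxm n).1,
      funext fun m => (aux_lazy_shift β x n m).2⟩⟩

end Aux6
/-- `D'_β = ⋃_{n≥1} X'_{β,n}·D'_{β^(n)}` (here the union is reindexed by
`n+1`, `n ∈ ℕ`: the words of `X'_{β,n+1}` are `ℓ_0⋯ℓ_{n-1}s` with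
`s ∈ [[ℓ_n+1, ⌈β_n⌉-1]]`), and every prefix of `ℓ*_β(x_β−1)` is a prefix of an
element of `D'_β`. -/
theorem lazySet_decomposition (β : ℕ → ℝ) (hβ : IsCantorBase β) (hx : XBSummable β)
    (ℓstar : ℕ → ℤ)
    (hl : Tendsto (lazyDigit β) (nhdsWithin (xB β - 1) (Set.Ioi (xB β - 1))) (nhds ℓstar)) :
    (lazySet β = {a | ∃ n : ℕ, (∀ i < n, a i = ℓstar i) ∧
      ℓstar n < a n ∧ a n ≤ ⌈β n⌉ - 1 ∧
      (fun m => a (n + 1 + m)) ∈ lazySet (shiftBase β (n + 1))}) ∧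
    ∀ k : ℕ, ∃ a ∈ lazySet β, ∀ i < k, a i = ℓstar i := by
  constructor
  · ext a
    constructor
    · rintro ⟨x, hxm, rfl⟩
      exact aux_forward hβ hx hl hxm
    · rintro ⟨n, h1, h2, h3, h4⟩
      obtain ⟨z, hz, hza⟩ := h4
      exact aux_reverse hβ hx hl h1 h2 h3 hz hza
  · intro k
    have hIoo : Set.Ioo (xB β - 1) (xB β) ∈ nhdsWithin (xB β - 1) (Set.Ioi (xB β - 1)) :=
      Ioo_mem_nhdsGT_of_mem ⟨le_rfl, by linarith⟩
    obtain ⟨y, hy1, hy2⟩ :=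
      ((aux_hevk hl k).and (eventually_of_mem hIoo fun y hy => hy)).exists
    exact ⟨lazyDigit β y, ⟨y, ⟨hy2.1, hy2.2.le⟩, rfl⟩, hy1⟩
end

section
/- Let β be an alternate base of length p (so x_β<+∞). Then D'_β = ⋃_{h=0}^{p−1} Y'_{β,h}·D'_{β^(h)} (concatenation of each word of Y'_{β,h} with each element of D'_{β^(h)}). -/
open Filter Topology

section Aux

variable {β : ℕ → ℝ}

lemma prodUpTo_pos (h : ∀ n, 1 < β n) (n : ℕ) : 0 < prodUpTo β n :=
  Finset.prod_pos fun i _ => lt_trans one_pos (h i)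

lemma one_le_prodUpTo (h : ∀ n, 1 < β n) (n : ℕ) : 1 ≤ prodUpTo β n := by
  have := Finset.prod_le_prod (s := Finset.range (n + 1)) (f := fun _ => (1:ℝ)) (g := β)
    (fun i _ => zero_le_one) (fun i _ => (h i).le)
  simpa [prodUpTo] using this

lemma prodUpTo_tendsto (hβ : IsCantorBase β) :
    Filter.Tendsto (prodUpTo β) Filter.atTop Filter.atTop :=
  hβ.prod_tendsto.comp (Filter.tendsto_add_atTop_nat 1)

lemma sub_ceil_mem (t c : ℝ) : t - (⌈t - c⌉ : ℝ) ∈ Set.Ioc (c - 1) c := by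
  constructor
  · have := Int.ceil_lt_add_one (t - c); linarith
  · have := Int.le_ceil (t - c); linarith

lemma lazyS_zero (x : ℝ) : lazyS β x 0 = β 0 * x - (lazyDigit β x 0 : ℝ) := rfl

lemma lazyS_succ (x : ℝ) (n : ℕ) :
    lazyS β x (n + 1) = β (n + 1) * lazyS β x n - (lazyDigit β x (n + 1) : ℝ) := rfl

lemma lazyDigit_zero (x : ℝ) : lazyDigit β x 0 = ⌈β 0 * x - xB (shiftBase β 1)⌉ := rfl

lemma lazyDigit_succ (x : ℝ) (n : ℕ) :
    lazyDigit β x (n + 1) = ⌈β (n + 1) * lazyS β x n - xB (shiftBase β (n + 2))⌉ := rfl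

lemma lazyS_mem (x : ℝ) (n : ℕ) :
    lazyS β x n ∈ Set.Ioc (xB (shiftBase β (n + 1)) - 1) (xB (shiftBase β (n + 1))) := by
  cases n with
  | zero => exact sub_ceil_mem (β 0 * x) _
  | succ n => exact sub_ceil_mem (β (n + 1) * lazyS β x n) _

lemma shiftBase_add (m k : ℕ) : shiftBase (shiftBase β m) k = shiftBase β (m + k) := by
  funext i; simp [shiftBase, add_assoc]

lemma shiftBase_zero : shiftBase β 0 = β := by funext i; simp [shiftBase]

lemma lazy_shift (x : ℝ) (n : ℕ) : ∀ m : ℕ,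
    lazyDigit β x (n + 1 + m) = lazyDigit (shiftBase β (n + 1)) (lazyS β x n) m ∧
    lazyS β x (n + 1 + m) = lazyS (shiftBase β (n + 1)) (lazyS β x n) m := by
  intro m
  have e2 : ∀ k : ℕ, shiftBase (shiftBase β (n + 1)) k = shiftBase β (n + 1 + k) :=
    fun k => shiftBase_add _ _
  induction m with
  | zero =>
      have hd : lazyDigit β x (n + 1 + 0) =
          lazyDigit (shiftBase β (n + 1)) (lazyS β x n) 0 := by
        rw [show n + 1 + 0 = n + 1 from rfl, lazyDigit_succ, lazyDigit_zero, e2 1]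
        rfl
      exact ⟨hd, by rw [show n + 1 + 0 = n + 1 from rfl, lazyS_succ, lazyS_zero, hd]; rfl⟩
  | succ m ih =>
      obtain ⟨ihd, ihs⟩ := ih
      have hd : lazyDigit β x ((n + 1 + m) + 1) =
          lazyDigit (shiftBase β (n + 1)) (lazyS β x n) (m + 1) := by
        rw [lazyDigit_succ, lazyDigit_succ, ihs, e2 (m + 2)]
        rfl
      refine ⟨hd, ?_⟩
      rw [show n + 1 + (m + 1) = (n + 1 + m) + 1 from rfl, lazyS_succ, lazyS_succ, ihs, hd]
      rfl
lemma lazyS_sub_lt_one (x y : ℝ) (n : ℕ) : lazyS β x n - lazyS β y n < 1 := by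
  have hx := (lazyS_mem (β := β) x n).2
  have hy := (lazyS_mem (β := β) y n).1
  linarith

lemma lazyS_diff_eq (x y : ℝ) (N : ℕ)
    (h : ∀ k ≤ N, lazyDigit β x k = lazyDigit β y k) :
    lazyS β x N - lazyS β y N = prodUpTo β N * (x - y) := by
  induction N with
  | zero =>
      rw [lazyS_zero, lazyS_zero, h 0 (le_refl 0)]
      simp [prodUpTo]
      ring
  | succ N ih =>
      have hN : ∀ k ≤ N, lazyDigit β x k = lazyDigit β y k := fun k hk => h k (hk.trans (Nat.le_succ N))
      rw [lazyS_succ, lazyS_succ, h (N + 1) (le_refl _)]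
      have : prodUpTo β (N + 1) = prodUpTo β N * β (N + 1) := by
        simp [prodUpTo, Finset.prod_range_succ]
      rw [this]
      linear_combination (β (N + 1)) * ih hN

lemma lazy_lexLt (hβ : IsCantorBase β) {x y : ℝ} (hxy : y < x) :
    ∃ k, (∀ i < k, lazyDigit β y i = lazyDigit β x i) ∧ lazyDigit β y k < lazyDigit β x k := by
  classical
  have hpos : 0 < x - y := by linarith
  obtain ⟨N, hN⟩ : ∃ N, 1 ≤ prodUpTo β N * (x - y) := by
    have := (prodUpTo_tendsto hβ).eventually_ge_atTop (1 / (x - y))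
    obtain ⟨N, hN⟩ := this.exists
    exact ⟨N, by rw [div_le_iff₀ hpos] at hN; linarith⟩
  have hne : ∃ k, lazyDigit β y k ≠ lazyDigit β x k := by
    by_contra hall
    push_neg at hall
    have := lazyS_diff_eq (β := β) x y N (fun k _ => (hall k).symm)
    have h1 := lazyS_sub_lt_one (β := β) x y N
    linarith
  let k := Nat.find hne
  have hkne : lazyDigit β y k ≠ lazyDigit β x k := Nat.find_spec hne
  have hagree : ∀ i < k, lazyDigit β y i = lazyDigit β x i := by
    intro i hi
    by_contra hcon
    exact Nat.find_min hne hi hcon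
  refine ⟨k, hagree, lt_of_le_of_ne ?_ hkne⟩
  have hb0 : (0:ℝ) < β 0 := lt_trans one_pos (hβ.one_lt 0)
  match hk : k with
  | 0 =>
      rw [lazyDigit_zero, lazyDigit_zero]
      exact Int.ceil_le_ceil (by nlinarith)
  | j + 1 =>
      have hs : lazyS β x j - lazyS β y j = prodUpTo β j * (x - y) := by
        refine lazyS_diff_eq x y j (fun i hi => ?_)
        exact (hagree i (by omega)).symm
      have hsp : lazyS β y j ≤ lazyS β x j := by
        have := prodUpTo_pos hβ.one_lt j
        nlinarith
      rw [lazyDigit_succ, lazyDigit_succ]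
      have hbj : (0:ℝ) < β (j + 1) := lt_trans one_pos (hβ.one_lt (j + 1))
      exact Int.ceil_le_ceil (by nlinarith)
section Periodic

variable {β : ℕ → ℝ} {p : ℕ}

lemma beta_add_mul (hper : ∀ n, β (n + p) = β n) : ∀ q n, β (n + p * q) = β n := by
  intro q
  induction q with
  | zero => simp
  | succ q ih =>
      intro n
      have : n + p * (q + 1) = (n + p * q) + p := by ring
      rw [this, hper, ih]

lemma shiftBase_mod (hper : ∀ n, β (n + p) = β n) (n : ℕ) :
    shiftBase β n = shiftBase β (n % p) := by
  funext m
  show β (n + m) = β (n % p + m)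
  have hd := Nat.mod_add_div n p
  rw [show n + m = (n % p + m) + p * (n / p) by omega, beta_add_mul hper]

lemma block_prod (h1 : ∀ n, 1 < β n) (hper : ∀ n, β (n + p) = β n) :
    ∀ m, ∏ i ∈ Finset.range p, β (m + i) = ∏ i ∈ Finset.range p, β i := by
  intro m
  induction m with
  | zero => simp
  | succ m ih =>
      have hm : β m ≠ 0 := by have := h1 m; linarith
      have h1' : ∏ i ∈ Finset.range (p + 1), β (m + i) =
          (∏ i ∈ Finset.range p, β (m + i)) * β (m + p) := Finset.prod_range_succ _ _
      have h2' : ∏ i ∈ Finset.range (p + 1), β (m + i) =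
          (∏ i ∈ Finset.range p, β (m + (i + 1))) * β m := Finset.prod_range_succ' _ _
      have key : (∏ i ∈ Finset.range p, β (m + 1 + i)) * β m =
          (∏ i ∈ Finset.range p, β (m + i)) * β m := by
        calc (∏ i ∈ Finset.range p, β (m + 1 + i)) * β m
            = (∏ i ∈ Finset.range p, β (m + (i + 1))) * β m := by
              congr 1; exact Finset.prod_congr rfl fun i _ => by rw [show m + 1 + i = m + (i + 1) by ring]
          _ = (∏ i ∈ Finset.range p, β (m + i)) * β (m + p) := by rw [← h2', h1']
          _ = (∏ i ∈ Finset.range p, β (m + i)) * β m := by rw [hper]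
      have := mul_right_cancel₀ hm key
      rw [this, ih]

lemma prod_range_mul (h1 : ∀ n, 1 < β n) (hper : ∀ n, β (n + p) = β n) :
    ∀ q, ∏ i ∈ Finset.range (p * q), β i = (∏ i ∈ Finset.range p, β i) ^ q := by
  intro q
  induction q with
  | zero => simp
  | succ q ih =>
      rw [show p * (q + 1) = p * q + p by ring, Finset.prod_range_add, ih,
        block_prod h1 hper, pow_succ]

lemma prodUpTo_ge (h1 : ∀ n, 1 < β n) (hper : ∀ n, β (n + p) = β n) (k : ℕ) :
    (∏ i ∈ Finset.range p, β i) ^ ((k + 1) / p) ≤ prodUpTo β k := by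
  set D := ∏ i ∈ Finset.range p, β i with hD
  have hq : p * ((k + 1) / p) ≤ k + 1 := Nat.mul_div_le _ _
  have hsplit : prodUpTo β k =
      (∏ i ∈ Finset.range (p * ((k + 1) / p)), β i) *
      ∏ i ∈ Finset.range (k + 1 - p * ((k + 1) / p)), β (p * ((k + 1) / p) + i) := by
    have he : k + 1 = p * ((k + 1) / p) + (k + 1 - p * ((k + 1) / p)) :=
      (Nat.add_sub_cancel' hq).symm
    conv_lhs => rw [prodUpTo, he, Finset.prod_range_add]
  rw [hsplit, prod_range_mul h1 hper]
  have hone : (1:ℝ) ≤ ∏ i ∈ Finset.range (k + 1 - p * ((k + 1) / p)), β (p * ((k + 1) / p) + i) := by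
    have := Finset.prod_le_prod (s := Finset.range (k + 1 - p * ((k + 1) / p)))
      (f := fun _ => (1:ℝ)) (g := fun i => β (p * ((k + 1) / p) + i))
      (fun i _ => zero_le_one) (fun i _ => (h1 _).le)
    simpa using this
  have hDpos : (0:ℝ) < D := Finset.prod_pos fun i _ => lt_trans one_pos (h1 i)
  nlinarith [pow_pos hDpos ((k + 1) / p)]
lemma xbsummable_periodic (hp : 0 < p) (h1 : ∀ n, 1 < β n) (hper : ∀ n, β (n + p) = β n) :
    XBSummable β := by
  classical
  set D := ∏ i ∈ Finset.range p, β i with hD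
  have hβpos : ∀ n, (0:ℝ) < β n := fun n => lt_trans one_pos (h1 n)
  have hD1 : 1 < D := by
    have h0mem : 0 ∈ Finset.range p := Finset.mem_range.mpr hp
    have hsplit : D = β 0 * ∏ i ∈ (Finset.range p).erase 0, β i :=
      (Finset.mul_prod_erase _ _ h0mem).symm
    have hrest : (1:ℝ) ≤ ∏ i ∈ (Finset.range p).erase 0, β i := by
      have := Finset.prod_le_prod (s := (Finset.range p).erase 0)
        (f := fun _ => (1:ℝ)) (g := β) (fun i _ => zero_le_one) (fun i _ => (h1 i).le)
      simpa using this
    nlinarith [h1 0]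
  set M := ∑ i ∈ Finset.range p, β i with hM
  have hnum : ∀ k, ((⌈β k⌉ : ℝ) - 1) ≤ M := by
    intro k
    have h1' : β k = β (k % p) := by
      conv_lhs => rw [← Nat.mod_add_div k p]
      rw [beta_add_mul hper]
    have h2' : β (k % p) ≤ M :=
      Finset.single_le_sum (f := β) (fun i _ => (hβpos i).le)
        (Finset.mem_range.mpr (Nat.mod_lt _ hp))
    have := Int.ceil_lt_add_one (β k)
    linarith
  have hnum0 : ∀ k, (0:ℝ) ≤ (⌈β k⌉ : ℝ) - 1 := by
    intro k
    have := Int.le_ceil (β k)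
    have := h1 k
    linarith
  have hM0 : 0 ≤ M := le_trans (hnum0 0) (hnum 0)
  set r := D⁻¹ with hr
  have hr0 : 0 < r := inv_pos.mpr (lt_trans one_pos hD1)
  have hr1 : r < 1 := inv_lt_one_of_one_lt₀ hD1
  set s := r ^ ((p:ℝ)⁻¹) with hs
  have hs0 : 0 ≤ s := Real.rpow_nonneg hr0.le _
  have hs1 : s < 1 := Real.rpow_lt_one hr0.le hr1 (by positivity)
  have key : ∀ k, ((⌈β k⌉ : ℝ) - 1) / prodUpTo β k ≤ (M * r⁻¹) * s ^ k := by
    intro k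
    set e := (k + 1) / p with he
    have hprod := prodUpTo_ge h1 hper k
    have hDe : (0:ℝ) < D ^ e := pow_pos (lt_trans one_pos hD1) e
    have hp1 : ((⌈β k⌉ : ℝ) - 1) / prodUpTo β k ≤ M / D ^ e :=
      div_le_div₀ hM0 (hnum k) hDe hprod
    have hre : M / D ^ e = M * r ^ e := by
      rw [div_eq_mul_inv, hr, inv_pow]
    have hek : (k:ℝ) / p - 1 ≤ ((e:ℕ):ℝ) := by
      have hmod : p * e + (k + 1) % p = k + 1 := by
        rw [he]; exact Nat.div_add_mod (k + 1) p
      have hlt : k + 1 < p * e + p := by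
        have := Nat.mod_lt (k + 1) hp
        omega
      have hpR : (0:ℝ) < p := Nat.cast_pos.mpr hp
      have hcast : (k:ℝ) + 1 < p * e + p := by exact_mod_cast hlt
      rw [sub_le_iff_le_add, div_le_iff₀ hpR]
      nlinarith
    have h2 : r ^ e ≤ r⁻¹ * s ^ k := by
      have h3 : r ^ e = r ^ ((e:ℕ):ℝ) := (Real.rpow_natCast r e).symm
      have h4 : r ^ ((e:ℕ):ℝ) ≤ r ^ ((k:ℝ) / p - 1) :=
        Real.rpow_le_rpow_of_exponent_ge hr0 hr1.le hek
      have h5 : r ^ ((k:ℝ) / p - 1) = r ^ ((k:ℝ) / p) * r⁻¹ := by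
        rw [Real.rpow_sub hr0, Real.rpow_one, div_eq_mul_inv]
      have h6 : r ^ ((k:ℝ) / p) = s ^ k := by
        rw [show (k:ℝ) / p = (p:ℝ)⁻¹ * k by ring, Real.rpow_mul hr0.le, Real.rpow_natCast]
      rw [h3]
      rw [h5, h6] at h4
      linarith [h4]
    calc ((⌈β k⌉ : ℝ) - 1) / prodUpTo β k ≤ M / D ^ e := hp1
      _ = M * r ^ e := hre
      _ ≤ M * (r⁻¹ * s ^ k) := mul_le_mul_of_nonneg_left h2 hM0
      _ = (M * r⁻¹) * s ^ k := by ring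
  have hsum : Summable (fun k => (M * r⁻¹) * s ^ k) :=
    (summable_geometric_of_lt_one hs0 hs1).mul_left _
  exact Summable.of_nonneg_of_le
    (fun k => div_nonneg (hnum0 k) (prodUpTo_pos h1 k).le) key hsum
lemma xbsummable_shift (hp : 0 < p) (h1 : ∀ n, 1 < β n) (hper : ∀ n, β (n + p) = β n)
    (n : ℕ) : XBSummable (shiftBase β n) := by
  refine xbsummable_periodic (p := p) hp (fun k => h1 (n + k)) (fun k => ?_)
  show β (n + (k + p)) = β (n + k)
  rw [show n + (k + p) = (n + k) + p by ring, hper]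

lemma xB_nonneg (h1 : ∀ n, 1 < β n) : 0 ≤ xB β := by
  refine tsum_nonneg fun n => div_nonneg ?_ (prodUpTo_pos h1 n).le
  have := Int.le_ceil (β n)
  have := h1 n
  linarith

lemma xB_rec {g : ℕ → ℝ} (hs : XBSummable g) (hg : 0 < g 0) :
    g 0 * xB g = ((⌈g 0⌉ : ℝ) - 1) + xB (shiftBase g 1) := by
  have h0 : xB g = ((⌈g 0⌉ : ℝ) - 1) / prodUpTo g 0 +
      ∑' n, ((⌈g (n + 1)⌉ : ℝ) - 1) / prodUpTo g (n + 1) := Summable.tsum_eq_zero_add hs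
  have hprod0 : prodUpTo g 0 = g 0 := by simp [prodUpTo]
  have hterm : ∀ n : ℕ, ((⌈g (n + 1)⌉ : ℝ) - 1) / prodUpTo g (n + 1) =
      (g 0)⁻¹ * (((⌈shiftBase g 1 n⌉ : ℝ) - 1) / prodUpTo (shiftBase g 1) n) := by
    intro n
    have hp1 : prodUpTo g (n + 1) = g 0 * prodUpTo (shiftBase g 1) n := by
      rw [prodUpTo, prodUpTo, Finset.prod_range_succ']
      rw [mul_comm]
      congr 1
      exact Finset.prod_congr rfl fun i _ => by
        show g (i + 1) = g (1 + i); rw [Nat.add_comm]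
    have hg1 : g (n + 1) = shiftBase g 1 n := by
      show g (n + 1) = g (1 + n); rw [Nat.add_comm]
    rw [hp1, hg1]
    field_simp
  have hsum : xB g = ((⌈g 0⌉ : ℝ) - 1) / g 0 + (g 0)⁻¹ * xB (shiftBase g 1) := by
    rw [h0, hprod0]
    congr 1
    rw [tsum_congr hterm, tsum_mul_left]
    rfl
  rw [hsum]
  field_simp

lemma xB_step (hp : 0 < p) (h1 : ∀ n, 1 < β n) (hper : ∀ n, β (n + p) = β n) (n : ℕ) :
    β n * xB (shiftBase β n) = ((⌈β n⌉ : ℝ) - 1) + xB (shiftBase β (n + 1)) := by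
  have := xB_rec (g := shiftBase β n) (xbsummable_shift hp h1 hper n)
    (lt_trans one_pos (h1 (n + 0)))
  rw [shiftBase_add] at this
  exact this

lemma digit_helper (hp : 0 < p) (h1 : ∀ n, 1 < β n) (hper : ∀ n, β (n + p) = β n)
    (n : ℕ) {s : ℝ}
    (hs : s ∈ Set.Ioc (xB (shiftBase β n) - 1) (xB (shiftBase β n))) :
    0 ≤ ⌈β n * s - xB (shiftBase β (n + 1))⌉ ∧
      ⌈β n * s - xB (shiftBase β (n + 1))⌉ ≤ ⌈β n⌉ - 1 := by
  have hid := xB_step hp h1 hper n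
  have hb : (0:ℝ) < β n := lt_trans one_pos (h1 n)
  constructor
  · have : (-1 : ℝ) < β n * s - xB (shiftBase β (n + 1)) := by
      have hc := Int.le_ceil (β n)
      nlinarith [hs.1]
    have := Int.lt_ceil.mpr (by exact_mod_cast this : ((-1 : ℤ) : ℝ) < β n * s - xB (shiftBase β (n + 1)))
    omega
  · refine Int.ceil_le.mpr ?_
    push_cast
    nlinarith [hs.2]

lemma lazyDigit_bounds (hp : 0 < p) (h1 : ∀ n, 1 < β n) (hper : ∀ n, β (n + p) = β n)
    {x : ℝ} (hx : x ∈ Set.Ioc (xB β - 1) (xB β)) (n : ℕ) :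
    0 ≤ lazyDigit β x n ∧ lazyDigit β x n ≤ ⌈β n⌉ - 1 := by
  cases n with
  | zero =>
      have hx0 : x ∈ Set.Ioc (xB (shiftBase β 0) - 1) (xB (shiftBase β 0)) := by
        rw [shiftBase_zero]; exact hx
      exact digit_helper hp h1 hper 0 hx0
  | succ m =>
      exact digit_helper hp h1 hper (m + 1) (lazyS_mem x m)
noncomputable def sHat (β : ℕ → ℝ) (ℓ : ℕ → ℤ) : ℕ → ℝ
  | 0 => xB β - 1
  | k + 1 => β k * sHat β ℓ k - (ℓ k : ℝ)

noncomputable def backVal (β : ℕ → ℝ) (a : ℕ → ℤ) (z : ℝ) : ℕ → ℕ → ℝ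
  | _, 0 => z
  | k, j + 1 => ((a k : ℝ) + backVal β a z (k + 1) j) / β k

end Periodic
end Aux

/-- for an alternate base of length `p`,
`D'_β = ⋃_{h=0}^{p−1} Y'_{β,h}·D'_{β^(h)}`. -/
theorem lazySet_decomposition_alternate (β : ℕ → ℝ) (p : ℕ) (hp : 0 < p)
    (hβ : IsCantorBase β) (hper : ∀ n, β (n + p) = β n)
    (ℓstar : ℕ → ℤ)
    (hl : Tendsto (lazyDigit β) (nhdsWithin (xB β - 1) (Set.Ioi (xB β - 1))) (nhds ℓstar)) :
    lazySet β = {a | ∃ h < p, ∃ n : ℕ, 1 ≤ n ∧ n % p = h ∧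
      (∀ i < n - 1, a i = ℓstar i) ∧
      ℓstar (n - 1) < a (n - 1) ∧ a (n - 1) ≤ ⌈β (n - 1)⌉ - 1 ∧
      (fun m => a (n + m)) ∈ lazySet (shiftBase β h)} := by
  classical
  have h1 := hβ.one_lt
  set F := nhdsWithin (xB β - 1) (Set.Ioi (xB β - 1)) with hF
  haveI hFne : F.NeBot := nhdsGT_neBot _
  have hxblt : xB β - 1 < xB β := sub_lt_self _ one_pos
  have hdom_mem : ∀ᶠ y in F, y ∈ Set.Ioc (xB β - 1) (xB β) :=
    Ioc_mem_nhdsGT_of_mem ⟨le_refl _, hxblt⟩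
  have hdig : ∀ k, ∀ᶠ y in F, lazyDigit β y k = ℓstar k := by
    intro k
    have h := ((continuous_apply k).tendsto ℓstar).comp hl
    have hmem : {ℓstar k} ∈ nhds (ℓstar k) :=
      IsOpen.mem_nhds (isOpen_discrete _) (Set.mem_singleton _)
    exact h.eventually (Filter.eventually_of_mem hmem fun z hz => hz)
  have hdigs : ∀ K, ∀ᶠ y in F, ∀ k < K, lazyDigit β y k = ℓstar k := by
    intro K
    induction K with
    | zero => exact Filter.Eventually.of_forall fun y k hk => absurd hk (Nat.not_lt_zero k)
    | succ K ih =>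
        filter_upwards [ih, hdig K] with y hy1 hy2
        intro k hk
        rcases Nat.lt_succ_iff_lt_or_eq.mp hk with h | h
        · exact hy1 k h
        · subst h; exact hy2
  have hvalid : ∀ k, 0 ≤ ℓstar k ∧ ℓstar k ≤ ⌈β k⌉ - 1 := by
    intro k
    obtain ⟨y, hy1, hy2⟩ := ((hdig k).and hdom_mem).exists
    rw [← hy1]
    exact lazyDigit_bounds hp h1 hper hy2 k
  have hid : Tendsto (fun y : ℝ => y) F (nhds (xB β - 1)) :=
    tendsto_id.mono_left nhdsWithin_le_nhds
  have hsT : ∀ k, Tendsto (fun y => lazyS β y k) F (nhds (sHat β ℓstar (k + 1))) := by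
    intro k
    induction k with
    | zero =>
        have hbase : Tendsto (fun y : ℝ => β 0 * y - (ℓstar 0 : ℝ)) F
            (nhds (β 0 * (xB β - 1) - (ℓstar 0 : ℝ))) :=
          ((hid.const_mul (β 0)).sub_const _)
        refine hbase.congr' ?_
        filter_upwards [hdig 0] with y hy
        rw [lazyS_zero, hy]
    | succ k ih =>
        have hbase : Tendsto (fun y => β (k + 1) * lazyS β y k - (ℓstar (k + 1) : ℝ)) F
            (nhds (β (k + 1) * sHat β ℓstar (k + 1) - (ℓstar (k + 1) : ℝ))) :=
          ((ih.const_mul (β (k + 1))).sub_const _)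
        refine hbase.congr' ?_
        filter_upwards [hdig (k + 1)] with y hy
        rw [lazyS_succ, hy]
  have hsM : ∀ k, sHat β ℓstar k ∈
      Set.Icc (xB (shiftBase β k) - 1) (xB (shiftBase β k)) := by
    intro k
    cases k with
    | zero =>
        rw [shiftBase_zero]
        have h0 : sHat β ℓstar 0 = xB β - 1 := rfl
        exact ⟨h0.ge, by rw [h0]; linarith⟩
    | succ k =>
        constructor
        · exact ge_of_tendsto (hsT k)
            (Filter.Eventually.of_forall fun y => (lazyS_mem y k).1.le)
        · exact le_of_tendsto (hsT k)
            (Filter.Eventually.of_forall fun y => (lazyS_mem y k).2)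
  ext a
  simp only [Set.mem_setOf_eq]
  constructor
  · rintro ⟨x, hx, rfl⟩
    have hne : ∃ k, lazyDigit β x k ≠ ℓstar k := by
      by_contra hall
      push_neg at hall
      set mid := xB β - 1 + (x - (xB β - 1)) / 2 with hmid
      have hx1 := hx.1
      have hmidx : mid < x := by rw [hmid]; linarith
      have hmid1 : xB β - 1 < mid := by rw [hmid]; linarith
      obtain ⟨N, hN⟩ := ((prodUpTo_tendsto hβ).eventually_ge_atTop (1 / (x - mid))).exists
      have hmidF : ∀ᶠ y in F, y < mid :=
        mem_nhdsWithin_of_mem_nhds (Iio_mem_nhds hmid1)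
      obtain ⟨y, hy1, hy2⟩ := ((hdigs (N + 1)).and hmidF).exists
      have hagree : ∀ k ≤ N, lazyDigit β x k = lazyDigit β y k := by
        intro k hk
        rw [hall k, hy1 k (by omega)]
      have hdiff := lazyS_diff_eq (β := β) x y N hagree
      have hlt1 := lazyS_sub_lt_one (β := β) x y N
      have hPpos := prodUpTo_pos h1 N
      have h3 : 0 < x - mid := by linarith
      rw [div_le_iff₀ h3] at hN
      nlinarith
    set k := Nat.find hne with hk
    have hkspec : lazyDigit β x k ≠ ℓstar k := Nat.find_spec hne
    have hkmin : ∀ i < k, lazyDigit β x i = ℓstar i := by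
      intro i hi
      by_contra hcon
      exact Nat.find_min hne hi hcon
    have hklt : ℓstar k < lazyDigit β x k := by
      by_contra hcon
      push_neg at hcon
      have hxF : ∀ᶠ y in F, y < x :=
        mem_nhdsWithin_of_mem_nhds (Iio_mem_nhds hx.1)
      obtain ⟨y, hy1, hy2⟩ := ((hdigs (k + 1)).and hxF).exists
      obtain ⟨j, hj1, hj2⟩ := lazy_lexLt hβ hy2
      rcases lt_trichotomy j k with hjk | hjk | hjk
      · rw [hy1 j (by omega), ← hkmin j hjk] at hj2
        exact lt_irrefl _ hj2
      · rw [hjk] at hj2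
        rw [hy1 k (by omega)] at hj2
        omega
      · have h5 := hj1 k hjk
        rw [hy1 k (by omega)] at h5
        exact hkspec h5.symm
    refine ⟨(k + 1) % p, Nat.mod_lt _ hp, k + 1, le_add_self, rfl, ?_, ?_, ?_, ?_⟩
    · intro i hi
      exact hkmin i (by omega)
    · simpa using hklt
    · simpa using (lazyDigit_bounds hp h1 hper hx k).2
    · rw [← shiftBase_mod hper (k + 1)]
      exact ⟨lazyS β x k, lazyS_mem x k, funext fun m => (lazy_shift x k m).1⟩
  · rintro ⟨h, hh, n, hn1, hnp, hpre, hlow, hub, z, hz, htail⟩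
    obtain ⟨K, rfl⟩ : ∃ K, n = K + 1 := ⟨n - 1, by omega⟩
    have hsb : shiftBase β h = shiftBase β (K + 1) := by
      rw [← hnp]
      exact (shiftBase_mod hper (K + 1)).symm
    rw [hsb] at hz htail
    simp only [Nat.add_sub_cancel] at hpre hlow hub
    set V := backVal β a z with hV
    have hVeq : ∀ k j, V k (j + 1) = ((a k : ℝ) + V (k + 1) j) / β k := fun k j => rfl
    have hV0 : ∀ k, V k 0 = z := fun k => rfl
    have hbpos : ∀ k, (0:ℝ) < β k := fun k => lt_trans one_pos (h1 k)
    have key : ∀ j k, k + j = K + 1 →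
        (xB (shiftBase β k) - 1 < V k j ∧ V k j ≤ xB (shiftBase β k)) ∧
        (1 ≤ j → sHat β ℓstar k < V k j) ∧
        (∀ m, lazyDigit (shiftBase β k) (V k j) m =
          if m < j then a (k + m) else lazyDigit (shiftBase β (K + 1)) z (m - j)) := by
      intro j
      induction j with
      | zero =>
          intro k hk
          have hkK : k = K + 1 := by omega
          subst hkK
          refine ⟨⟨hz.1, hz.2⟩, fun h0 => absurd h0 (by omega), fun m => ?_⟩
          simp only [hV0]
          simp
      | succ j ih =>
          intro k hk
          have hk1 : (k + 1) + j = K + 1 := by omega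
          have hkK : k ≤ K := by omega
          obtain ⟨⟨hw1, hw2⟩, hwS, hwD⟩ := ih (k + 1) hk1
          have hstep := xB_step hp h1 hper k
          have hb := hbpos k
          have hcomm1 : sHat β ℓstar k * β k = β k * sHat β ℓstar k := mul_comm _ _
          have hcomm2 : xB (shiftBase β k) * β k = β k * xB (shiftBase β k) := mul_comm _ _
          have hrec : sHat β ℓstar (k + 1) = β k * sHat β ℓstar k - (ℓstar k : ℝ) := rfl
          have hak_ub : (a k : ℝ) ≤ (⌈β k⌉ : ℝ) - 1 := by
            rcases Nat.lt_or_ge k K with hkK' | hkK'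
            · rw [hpre k hkK']
              exact_mod_cast (hvalid k).2
            · have hkEq : k = K := by omega
              subst hkEq
              exact_mod_cast hub
          have hupper : V k (j + 1) ≤ xB (shiftBase β k) := by
            rw [hVeq, div_le_iff₀ hb]
            linarith [hstep, hak_ub, hw2, hcomm2]
          have hlower : sHat β ℓstar k < V k (j + 1) := by
            rw [hVeq, lt_div_iff₀ hb]
            rcases Nat.eq_zero_or_pos j with hj0 | hj1
            · subst hj0
              have hkEq : k = K := by omega
              subst hkEq
              have hzlow := hz.1
              have hsm := (hsM (k + 1)).2
              have hcast : (ℓstar k : ℝ) + 1 ≤ (a k : ℝ) := by exact_mod_cast hlow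
              simp only [hV0]
              linarith [hrec, hcomm1, hzlow, hsm, hcast]
            · have hak : (a k : ℝ) = (ℓstar k : ℝ) := by
                rw [hpre k (by omega)]
              linarith [hwS hj1, hrec, hcomm1]
          have hg0 : shiftBase β k 0 = β k := rfl
          have hmulV : β k * V k (j + 1) = (a k : ℝ) + V (k + 1) j := by
            rw [hVeq]
            field_simp
          have hd0 : lazyDigit (shiftBase β k) (V k (j + 1)) 0 = a k := by
            rw [lazyDigit_zero, shiftBase_add, hg0, hmulV]
            refine Int.ceil_eq_iff.mpr ⟨?_, ?_⟩
            · push_cast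
              linarith [hw1]
            · push_cast
              linarith [hw2]
          have hs0 : lazyS (shiftBase β k) (V k (j + 1)) 0 = V (k + 1) j := by
            rw [lazyS_zero, hd0, hg0, hmulV]
            ring
          refine ⟨⟨lt_of_le_of_lt (by linarith [(hsM k).1] :
              xB (shiftBase β k) - 1 ≤ sHat β ℓstar k) hlower, hupper⟩,
            fun _ => hlower, fun m => ?_⟩
          cases m with
          | zero =>
              simpa using hd0
          | succ m =>
              have hshift := (lazy_shift (β := shiftBase β k) (V k (j + 1)) 0 m).1
              rw [show 0 + 1 + m = m + 1 by omega] at hshift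
              rw [hshift, hs0, shiftBase_add, hwD m]
              rcases Nat.lt_or_ge m j with hmj | hmj
              · rw [if_pos hmj, if_pos (by omega)]
                congr 1
                omega
              · rw [if_neg (by omega), if_neg (by omega)]
                congr 1
                omega
    obtain ⟨⟨hx1, hx2⟩, hxS, hxD⟩ := key (K + 1) 0 (by omega)
    rw [shiftBase_zero] at hx1 hx2 hxD
    have hx0 : sHat β ℓstar 0 = xB β - 1 := rfl
    have hxlow : xB β - 1 < V 0 (K + 1) := by
      rw [← hx0]
      exact hxS (by omega)
    refine ⟨V 0 (K + 1), ⟨hxlow, hx2⟩, funext fun i => ?_⟩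
    have hdi := hxD i
    rcases Nat.lt_or_ge i (K + 1) with hi | hi
    · rw [if_pos hi] at hdi
      rw [hdi, Nat.zero_add]
    · rw [if_neg (by omega)] at hdi
      have ht := congrFun htail (i - (K + 1))
      rw [hdi, ← ht]
      congr 1
      omega
end
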